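/- arXiv:2007.08045 — 3 statements merged into one kernel-verified Lean document; each statement's English description precedes it below -/
import Mathlib

section
/- (Split lemma, part i–ii) Let 𝒯 be an envy-free feasible allocation and suppose agents of type x are split, i.e., there are distinct coalitions T, T' ∈ 𝒯 each containing an agent of destination exactly x. Then no agent in T or T' has destination strictly less than x (the type-x agents are the first to drop off in both coalitions), and |T| = |T'|. -/
open Finset MeasureTheory ENNReal

/-- Number of agents in coalition `T` whose destination is at least `r`. -/
noncomputable def nT (xd : ℕ → ℝ) (T : Finset ℕ) (r : ℝ) : ℕ := (T.filter fun a => r ≤ xd a).card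

/-- Shapley cost share of a passenger dropping at `y` in coalition `T`
(`∞` when `n_T` vanishes on part of `(0,y]`). -/
noncomputable def phi (xd : ℕ → ℝ) (T : Finset ℕ) (y : ℝ) : ℝ≥0∞ :=
  ∫⁻ r in Set.Ioc (0:ℝ) y, (nT xd T r : ℝ≥0∞)⁻¹

/-- Cost share including the capacity constraint of the taxi. -/
noncomputable def taxiCost (xd : ℕ → ℝ) (q : ℕ) (T : Finset ℕ) (y : ℝ) : ℝ≥0∞ :=
  if T.card ≤ q then phi xd T y else ⊤

/-- `Tl` is a partition of the agent set `A` into the (possibly empty) coalitions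
of the `k` taxis. -/
def IsPartition (A : Finset ℕ) {k : ℕ} (Tl : Fin k → Finset ℕ) : Prop :=
  (∀ i j, i ≠ j → Disjoint (Tl i) (Tl j)) ∧ Finset.univ.biUnion Tl = A

/-- Feasibility: each coalition respects the capacity of its taxi. -/
def Feasible {k : ℕ} (q : Fin k → ℕ) (Tl : Fin k → Finset ℕ) : Prop :=
  ∀ i, (Tl i).card ≤ q i

/-- Envy-freeness: no agent `a` can lower her cost by replacing an agent `b`
of another taxi. -/
def EnvyFree (xd : ℕ → ℝ) {k : ℕ} (q : Fin k → ℕ) (Tl : Fin k → Finset ℕ) : Prop :=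
  ∀ i j, i ≠ j → ∀ a ∈ Tl i, ∀ b ∈ Tl j,
    taxiCost xd (q i) (Tl i) (xd a) ≤ taxiCost xd (q j) ((Tl j).erase b ∪ {a}) (xd a)

/- ### Auxiliary lemmas -/

lemma nT_antitone (xd : ℕ → ℝ) (T : Finset ℕ) : Antitone (nT xd T) := by
  intro r s hrs
  apply Finset.card_le_card
  intro c hc
  rw [Finset.mem_filter] at hc ⊢
  exact ⟨hc.1, le_trans hrs hc.2⟩

lemma meas_inv_nT (xd : ℕ → ℝ) (T : Finset ℕ) :
    Measurable fun r => ((nT xd T r : ℝ≥0∞))⁻¹ :=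
  (measurable_from_top.comp (nT_antitone xd T).measurable).inv

lemma nT_swap (xd : ℕ → ℝ) {T : Finset ℕ} {b c : ℕ} (hc : c ∈ T) (hb : b ∉ T) (r : ℝ) :
    nT xd (T.erase c ∪ {b}) r
      = nT xd T r - (if r ≤ xd c then 1 else 0) + (if r ≤ xd b then 1 else 0) := by
  classical
  unfold nT
  rw [Finset.filter_union, Finset.filter_erase, Finset.filter_singleton]
  have hbe : b ∉ (Finset.filter (fun a => r ≤ xd a) T).erase c :=
    fun h => hb (Finset.mem_of_mem_filter _ (Finset.mem_of_mem_erase h))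
  by_cases hrb : r ≤ xd b
  · rw [if_pos hrb, if_pos hrb,
      Finset.card_union_of_disjoint (Finset.disjoint_singleton_right.mpr hbe),
      Finset.card_singleton]
    by_cases hrc : r ≤ xd c
    · rw [if_pos hrc, Finset.card_erase_of_mem (Finset.mem_filter.mpr ⟨hc, hrc⟩)]
    · have hcm : c ∉ Finset.filter (fun a => r ≤ xd a) T :=
        fun h => hrc (Finset.mem_filter.mp h).2
      rw [if_neg hrc, Finset.erase_eq_of_notMem hcm]
      omega
  · rw [if_neg hrb, if_neg hrb, Finset.union_empty]
    by_cases hrc : r ≤ xd c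
    · rw [if_pos hrc, Finset.card_erase_of_mem (Finset.mem_filter.mpr ⟨hc, hrc⟩)]
      omega
    · have hcm : c ∉ Finset.filter (fun a => r ≤ xd a) T :=
        fun h => hrc (Finset.mem_filter.mp h).2
      rw [if_neg hrc, Finset.erase_eq_of_notMem hcm]
      omega

lemma nT_card_pos (xd : ℕ → ℝ) {T : Finset ℕ} {c : ℕ} (hc : c ∈ T) {r : ℝ}
    (h : r ≤ xd c) : 1 ≤ nT xd T r :=
  Finset.card_pos.mpr ⟨c, Finset.mem_filter.mpr ⟨hc, h⟩⟩

lemma nT_swap_eq (xd : ℕ → ℝ) {T : Finset ℕ} {b c : ℕ} (hc : c ∈ T) (hb : b ∉ T)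
    (hx : xd b = xd c) (r : ℝ) : nT xd (T.erase c ∪ {b}) r = nT xd T r := by
  rw [nT_swap xd hc hb, hx]
  by_cases h : r ≤ xd c
  · have := nT_card_pos xd hc h
    rw [if_pos h]; omega
  · rw [if_neg h]; omega

lemma phi_swap_eq (xd : ℕ → ℝ) {T : Finset ℕ} {b c : ℕ} (hc : c ∈ T) (hb : b ∉ T)
    (hx : xd b = xd c) (y : ℝ) : phi xd (T.erase c ∪ {b}) y = phi xd T y := by
  unfold phi
  exact lintegral_congr fun r => by rw [nT_swap_eq xd hc hb hx]

lemma card_swap {T : Finset ℕ} {b c : ℕ} (hc : c ∈ T) (hb : b ∉ T) :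
    (T.erase c ∪ {b}).card = T.card := by
  classical
  have h1 : 1 ≤ T.card := Finset.card_pos.mpr ⟨c, hc⟩
  rw [Finset.card_union_of_disjoint
      (Finset.disjoint_singleton_right.mpr fun h => hb (Finset.mem_of_mem_erase h)),
    Finset.card_erase_of_mem hc, Finset.card_singleton]
  omega

lemma phi_const (xd : ℕ → ℝ) {T : Finset ℕ} {x : ℝ}
    (hall : ∀ c ∈ T, x ≤ xd c) :
    phi xd T x = ENNReal.ofReal x * ((T.card : ℝ≥0∞))⁻¹ := by
  unfold phi
  rw [setLIntegral_congr_fun (g := fun _ => ((T.card : ℝ≥0∞))⁻¹) measurableSet_Ioc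
      (fun r hr => ?_)]
  · rw [setLIntegral_const, Real.volume_Ioc, sub_zero, mul_comm]
  · congr 2
    unfold nT
    congr 1
    exact Finset.filter_true_of_mem fun d hd => le_trans hr.2 (hall d hd)

lemma inv_step {n N : ℕ} (h1 : 1 ≤ n) (h2 : n ≤ N) :
    ((n + 1 : ℕ) : ℝ≥0∞)⁻¹ + ((N * (N + 1) : ℕ) : ℝ≥0∞)⁻¹ ≤ ((n : ℕ) : ℝ≥0∞)⁻¹ := by
  have hn : (0:ℝ) < n := by exact_mod_cast h1
  have hN0 : (0:ℝ) < (N:ℝ) := by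
    have : (1:ℕ) ≤ N := le_trans h1 h2
    exact_mod_cast this
  have hN : (0:ℝ) < (N:ℝ) * ((N:ℝ) + 1) := mul_pos hN0 (by linarith)
  have hh : (0:ℝ) < (n:ℝ) + 1 := by linarith
  have cast1 : ((n + 1 : ℕ) : ℝ≥0∞) = ENNReal.ofReal ((n:ℝ) + 1) := by
    rw [← ENNReal.ofReal_natCast (n + 1)]
    congr 1
    push_cast
    ring
  have cast2 : ((N * (N + 1) : ℕ) : ℝ≥0∞) = ENNReal.ofReal ((N:ℝ) * ((N:ℝ) + 1)) := by
    rw [← ENNReal.ofReal_natCast (N * (N + 1))]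
    congr 1
    push_cast
    ring
  have cast3 : ((n : ℕ) : ℝ≥0∞) = ENNReal.ofReal (n:ℝ) := (ENNReal.ofReal_natCast n).symm
  rw [cast1, cast2, cast3, ← ENNReal.ofReal_inv_of_pos hh, ← ENNReal.ofReal_inv_of_pos hN,
    ← ENNReal.ofReal_inv_of_pos hn, ← ENNReal.ofReal_add (by positivity) (by positivity)]
  apply ENNReal.ofReal_le_ofReal
  have hNn : (n : ℝ) ≤ N := by exact_mod_cast h2
  rw [inv_eq_one_div, inv_eq_one_div, inv_eq_one_div,
    div_add_div _ _ (by positivity) (by positivity),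
    div_le_div_iff₀ (by positivity) hn]
  nlinarith [sq_nonneg ((N:ℝ) - n)]

lemma phi_strict (xd : ℕ → ℝ) {T : Finset ℕ} {a b c : ℕ} {x : ℝ}
    (haT : a ∈ T) (hax : xd a = x) (hcT : c ∈ T) (hc0 : 0 < xd c) (hcx : xd c < x)
    (hb : b ∉ T) (hbx : xd b = x) :
    phi xd (T.erase c ∪ {b}) x < phi xd T x := by
  classical
  set T' := T.erase c ∪ {b} with hT'
  set N := T.card with hN
  set δ : ℝ≥0∞ := ((N * (N + 1) : ℕ) : ℝ≥0∞)⁻¹ with hδ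
  have hbT' : b ∈ T' := Finset.mem_union_right _ (Finset.mem_singleton_self b)
  have hx0 : 0 < x := lt_trans hc0 hcx
  -- pointwise inequality on (0, x]
  have hpt : ∀ r ∈ Set.Ioc (0:ℝ) x,
      (nT xd T' r : ℝ≥0∞)⁻¹ + Set.indicator (Set.Ioc (xd c) x) (fun _ => δ) r
        ≤ (nT xd T r : ℝ≥0∞)⁻¹ := by
    intro r hr
    by_cases hrc : r ≤ xd c
    · have hind : Set.indicator (Set.Ioc (xd c) x) (fun _ => δ) r = 0 :=
        Set.indicator_of_notMem (fun h => absurd h.1 (not_lt.mpr hrc)) _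
      have heq : nT xd T' r = nT xd T r := by
        rw [nT_swap xd hcT hb, if_pos hrc, if_pos (hbx ▸ le_trans hrc (le_of_lt hcx))]
        have := nT_card_pos xd hcT hrc
        omega
      rw [hind, add_zero, heq]
    · have hind : Set.indicator (Set.Ioc (xd c) x) (fun _ => δ) r = δ :=
        Set.indicator_of_mem (show r ∈ Set.Ioc (xd c) x from ⟨lt_of_not_ge hrc, hr.2⟩) _
      have heq : nT xd T' r = nT xd T r + 1 := by
        rw [nT_swap xd hcT hb, if_neg hrc, if_pos (hbx ▸ hr.2)]
        omega
      have h1 : 1 ≤ nT xd T r := nT_card_pos xd haT (hax ▸ hr.2)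
      have h2 : nT xd T r ≤ N := Finset.card_le_card (Finset.filter_subset _ _)
      rw [hind, heq]
      exact_mod_cast inv_step h1 h2
  -- the three integrals
  have hmeas' := meas_inv_nT xd T'
  have hmono : (∫⁻ r in Set.Ioc (0:ℝ) x,
        ((nT xd T' r : ℝ≥0∞)⁻¹ + Set.indicator (Set.Ioc (xd c) x) (fun _ => δ) r))
      ≤ phi xd T x :=
    setLIntegral_mono (meas_inv_nT xd T) hpt
  rw [lintegral_add_left hmeas'] at hmono
  have hind_int : (∫⁻ r in Set.Ioc (0:ℝ) x,
      Set.indicator (Set.Ioc (xd c) x) (fun _ => δ) r)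
      = δ * ENNReal.ofReal (x - xd c) := by
    rw [lintegral_indicator measurableSet_Ioc, setLIntegral_const,
      Measure.restrict_apply measurableSet_Ioc,
      Set.inter_eq_left.mpr (Set.Ioc_subset_Ioc_left hc0.le), Real.volume_Ioc]
  rw [hind_int] at hmono
  have hfin : phi xd T' x ≠ ⊤ := by
    have hle : phi xd T' x ≤ ENNReal.ofReal x := by
      unfold phi
      calc (∫⁻ r in Set.Ioc (0:ℝ) x, (nT xd T' r : ℝ≥0∞)⁻¹)
          ≤ ∫⁻ _ in Set.Ioc (0:ℝ) x, 1 := by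
            apply setLIntegral_mono measurable_const
            intro r hr
            exact ENNReal.inv_le_one.mpr
              (by exact_mod_cast nT_card_pos xd hbT' (hbx ▸ hr.2))
        _ = ENNReal.ofReal x := by
            rw [setLIntegral_const, one_mul, Real.volume_Ioc, sub_zero]
    exact ne_top_of_le_ne_top ENNReal.ofReal_ne_top hle
  have hne : δ * ENNReal.ofReal (x - xd c) ≠ 0 := by
    apply mul_ne_zero
    · exact ENNReal.inv_ne_zero.mpr (ENNReal.natCast_ne_top _)
    · exact (ENNReal.ofReal_pos.mpr (by linarith)).ne'
  calc phi xd T' x < phi xd T' x + δ * ENNReal.ofReal (x - xd c) :=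
        ENNReal.lt_add_right hfin hne
    _ ≤ phi xd T x := hmono

/-- From envy-freeness : `phi (Tl i) x ≤ phi (Tl j) x` when `a ∈ Tl i`, `b ∈ Tl j`
both have destination `x`. -/
lemma phi_le_phi (xd : ℕ → ℝ) {k : ℕ} (q : Fin k → ℕ) (Tl : Fin k → Finset ℕ)
    (hfeas : Feasible q Tl) (hef : EnvyFree xd q Tl)
    {i j : Fin k} (hij : i ≠ j) {x : ℝ} {a b : ℕ}
    (ha : a ∈ Tl i) (hb : b ∈ Tl j) (haj : a ∉ Tl j)
    (hax : xd a = x) (hbx : xd b = x) :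
    phi xd (Tl i) x ≤ phi xd (Tl j) x := by
  have h := hef i j hij a ha b hb
  rw [hax] at h
  unfold taxiCost at h
  rw [if_pos (hfeas i), if_pos (by rw [card_swap hb haj]; exact hfeas j),
    phi_swap_eq xd hb haj (by rw [hax, hbx])] at h
  exact h

/-- Split lemma, parts i–ii: if agents of type `x` are split between two
distinct coalitions of an envy-free feasible allocation, then no member of either
coalition has destination `< x`, and the two coalitions have equal size. -/
theorem stmt4 (A : Finset ℕ) (xd : ℕ → ℝ) (hpos : ∀ a ∈ A, 0 < xd a)
    (k : ℕ) (q : Fin k → ℕ) (hq : ∀ i j : Fin k, i ≤ j → q j ≤ q i)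
    (Tl : Fin k → Finset ℕ)
    (hpart : IsPartition A Tl) (hfeas : Feasible q Tl) (hef : EnvyFree xd q Tl)
    (i j : Fin k) (hij : i ≠ j) (x : ℝ) (a b : ℕ)
    (ha : a ∈ Tl i) (hb : b ∈ Tl j) (hax : xd a = x) (hbx : xd b = x) :
    (∀ c ∈ Tl i, ¬ xd c < x) ∧ (∀ c ∈ Tl j, ¬ xd c < x) ∧
      (Tl i).card = (Tl j).card := by
  classical
  have hsub : ∀ i, Tl i ⊆ A := by
    intro i c hc
    rw [← hpart.2]
    exact Finset.mem_biUnion.mpr ⟨i, Finset.mem_univ i, hc⟩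
  have hposT : ∀ i, ∀ c ∈ Tl i, 0 < xd c := fun i c hc => hpos c (hsub i hc)
  have hdisj := hpart.1 i j hij
  have haj : a ∉ Tl j := Finset.disjoint_left.mp hdisj ha
  have hbi : b ∉ Tl i := Finset.disjoint_right.mp hdisj hb
  have h1 : phi xd (Tl i) x ≤ phi xd (Tl j) x :=
    phi_le_phi xd q Tl hfeas hef hij ha hb haj hax hbx
  have h2 : phi xd (Tl j) x ≤ phi xd (Tl i) x :=
    phi_le_phi xd q Tl hfeas hef hij.symm hb ha hbi hbx hax
  -- part (i) for `Tl i` : agent `b` would envy a closer agent `c`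
  have pi1 : ∀ c ∈ Tl i, ¬ xd c < x := by
    intro c hc hlt
    have h := hef j i hij.symm b hb c hc
    rw [hbx] at h
    unfold taxiCost at h
    rw [if_pos (hfeas j), if_pos (by rw [card_swap hc hbi]; exact hfeas i)] at h
    have hstrict : phi xd ((Tl i).erase c ∪ {b}) x < phi xd (Tl i) x :=
      phi_strict xd ha hax hc (hposT i c hc) hlt hbi hbx
    exact absurd (lt_of_le_of_lt (le_trans h1 h) hstrict) (lt_irrefl _)
  have pi2 : ∀ c ∈ Tl j, ¬ xd c < x := by
    intro c hc hlt
    have h := hef i j hij a ha c hc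
    rw [hax] at h
    unfold taxiCost at h
    rw [if_pos (hfeas i), if_pos (by rw [card_swap hc haj]; exact hfeas j)] at h
    have hstrict : phi xd ((Tl j).erase c ∪ {a}) x < phi xd (Tl j) x :=
      phi_strict xd hb hbx hc (hposT j c hc) hlt haj hax
    exact absurd (lt_of_le_of_lt (le_trans h2 h) hstrict) (lt_irrefl _)
  refine ⟨pi1, pi2, ?_⟩
  -- part (ii)
  have hx0 : 0 < x := hax ▸ hposT i a ha
  have heq : phi xd (Tl i) x = phi xd (Tl j) x := le_antisymm h1 h2
  rw [phi_const xd (fun c hc => not_lt.mp (pi1 c hc)),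
    phi_const xd (fun c hc => not_lt.mp (pi2 c hc))] at heq
  have hinv : (((Tl i).card : ℝ≥0∞))⁻¹ = (((Tl j).card : ℝ≥0∞))⁻¹ :=
    (ENNReal.mul_left_strictMono (ENNReal.ofReal_pos.mpr hx0).ne' ENNReal.ofReal_ne_top).injective
      (by rwa [mul_comm, mul_comm (ENNReal.ofReal x)] at heq)
  have : (((Tl i).card : ℝ≥0∞)) = ((Tl j).card : ℝ≥0∞) := by
    rw [← inv_inv (((Tl i).card : ℝ≥0∞)), hinv, inv_inv]
  exact_mod_cast this
end

section
/- (Backward greedy is socially optimal) Among all feasible allocations (partitions of agents into coalitions T_i with |T_i| ≤ q_i, where q_1 ≥ … ≥ q_k), the backward greedy allocation minimizes the total cost ∑_{i : T_i ≠ ∅} max_{a ∈ T_i} x_a. Moreover, the nonincreasing sequence of last drop-off points of any socially optimal feasible allocation equals that of the backward greedy allocation. -/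
open Finset MeasureTheory ENNReal

/-- Total capacity of taxis `1, …, i`. -/
def cumQ (q : ℕ → ℕ) (i : ℕ) : ℕ := ∑ j ∈ Finset.Icc 1 i, q j

/-- The backward greedy allocation for agents `1, …, n` sorted nondecreasingly:
taxi `1` gets the `q 1` furthest agents, taxi `2` the next `q 2` furthest, etc. -/
def greedyT (n : ℕ) (q : ℕ → ℕ) (i : ℕ) : Finset ℕ :=
  Finset.Icc (max 1 (n + 1 - cumQ q i)) (n - cumQ q (i - 1))

/-- Furthest destination of a coalition (`0` for the empty coalition). -/
noncomputable def maxdest (x : ℕ → ℝ) (T : Finset ℕ) : ℝ := WithBot.unbotD 0 ((T.image x).max)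

/-- `Sl` is a feasible allocation of the agents `1, …, n` into `k` taxis of
capacities `q 1 ≥ … ≥ q k`. -/
def FeasAlloc (n k : ℕ) (q : ℕ → ℕ) (Sl : ℕ → Finset ℕ) : Prop :=
  (∀ i ∈ Finset.Icc 1 k, (Sl i).card ≤ q i) ∧
  (∀ i ∈ Finset.Icc 1 k, ∀ j ∈ Finset.Icc 1 k, i ≠ j → Disjoint (Sl i) (Sl j)) ∧
  (Finset.Icc 1 k).biUnion Sl = Finset.Icc 1 n

/-! ### Auxiliary lemmas -/

lemma cumQ_zero (q : ℕ → ℕ) : cumQ q 0 = 0 := by simp [cumQ]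

lemma cumQ_succ (q : ℕ → ℕ) (i : ℕ) : cumQ q (i+1) = cumQ q i + q (i+1) := by
  rw [cumQ, cumQ, Finset.sum_Icc_succ_top (by omega)]

lemma cumQ_mono (q : ℕ → ℕ) : Monotone (cumQ q) := by
  apply monotone_nat_of_le_succ
  intro i; rw [cumQ_succ]; omega

lemma cumQ_pred (q : ℕ → ℕ) {i : ℕ} (hi : 1 ≤ i) :
    cumQ q i = cumQ q (i-1) + q i := by
  have h := cumQ_succ q (i-1)
  rw [show i - 1 + 1 = i by omega] at h
  exact h

lemma maxdest_empty (x : ℕ → ℝ) : maxdest x ∅ = 0 := by simp [maxdest]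

lemma maxdest_eq_max' (x : ℕ → ℝ) {T : Finset ℕ} (hT : T.Nonempty) :
    maxdest x T = (T.image x).max' (hT.image x) := by
  rw [maxdest, ← Finset.coe_max' (hT.image x)]; rfl

lemma le_maxdest (x : ℕ → ℝ) {T : Finset ℕ} {a : ℕ} (ha : a ∈ T) : x a ≤ maxdest x T := by
  rw [maxdest_eq_max' x ⟨a, ha⟩]
  exact Finset.le_max' _ _ (Finset.mem_image_of_mem x ha)

lemma maxdest_Icc (x : ℕ → ℝ) (n : ℕ)
    (hmono : ∀ a b, 1 ≤ a → a ≤ b → b ≤ n → x a ≤ x b)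
    {a b : ℕ} (h1 : 1 ≤ a) (hab : a ≤ b) (hbn : b ≤ n) :
    maxdest x (Finset.Icc a b) = x b := by
  have hne : (Finset.Icc a b).Nonempty := ⟨a, Finset.mem_Icc.mpr ⟨le_refl a, hab⟩⟩
  apply le_antisymm
  · rw [maxdest_eq_max' x hne]
    apply Finset.max'_le
    intro y hy
    obtain ⟨c, hc, rfl⟩ := Finset.mem_image.mp hy
    rw [Finset.mem_Icc] at hc
    exact hmono c b (by omega) hc.2 hbn
  · exact le_maxdest x (Finset.mem_Icc.mpr ⟨hab, le_refl b⟩)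

lemma maxdest_nonneg (x : ℕ → ℝ) (n : ℕ)
    (hpos : ∀ a ∈ Finset.Icc 1 n, 0 < x a)
    {T : Finset ℕ} (hT : T ⊆ Finset.Icc 1 n) : 0 ≤ maxdest x T := by
  rcases T.eq_empty_or_nonempty with rfl | hne
  · simp [maxdest]
  · obtain ⟨a, ha⟩ := hne
    exact le_trans (le_of_lt (hpos a (hT ha))) (le_maxdest x ha)

lemma sum_subset_le_cumQ (k : ℕ) (q : ℕ → ℕ)
    (hq : ∀ i j, 1 ≤ i → i ≤ j → j ≤ k → q j ≤ q i) :
    ∀ m (I : Finset ℕ), I ⊆ Finset.Icc 1 k → I.card = m → ∑ i ∈ I, q i ≤ cumQ q m := by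
  intro m
  induction m with
  | zero => intro I _ h0; simp [Finset.card_eq_zero.mp h0, cumQ_zero]
  | succ m ih =>
    intro I hI hc
    have hne : I.Nonempty := by rw [← Finset.card_pos, hc]; omega
    have hMI : I.max' hne ∈ I := I.max'_mem hne
    set M := I.max' hne with hM
    have hMk := Finset.mem_Icc.mp (hI hMI)
    have hsub : I ⊆ Finset.Icc 1 M := by
      intro a ha
      exact Finset.mem_Icc.mpr ⟨(Finset.mem_Icc.mp (hI ha)).1, I.le_max' a ha⟩
    have hcard : m + 1 ≤ M := by
      have := Finset.card_le_card hsub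
      rw [hc, Nat.card_Icc] at this; omega
    have h1 : ∑ i ∈ I.erase M, q i ≤ cumQ q m := by
      apply ih _ (fun a ha => hI (Finset.mem_of_mem_erase ha))
      rw [Finset.card_erase_of_mem hMI, hc]
      omega
    have h2 : q M ≤ q (m+1) := hq (m+1) M (by omega) hcard hMk.2
    have h3 := Finset.sum_erase_add I q hMI
    rw [cumQ_succ]
    omega

lemma greedy_feas (n k : ℕ) (q : ℕ → ℕ) (hfeas : n ≤ cumQ q k) :
    FeasAlloc n k q (greedyT n q) := by
  refine ⟨?_, ?_, ?_⟩
  · intro i hi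
    rw [Finset.mem_Icc] at hi
    have hc := cumQ_pred q hi.1
    rw [greedyT, Nat.card_Icc]
    omega
  · intro i hi j hj hij
    rw [Finset.mem_Icc] at hi hj
    wlog h : i < j generalizing i j
    · exact (this j hj i hi hij.symm (by omega)).symm
    have hm : cumQ q i ≤ cumQ q (j-1) := cumQ_mono q (by omega)
    rw [Finset.disjoint_left]
    intro a ha ha'
    rw [greedyT, Finset.mem_Icc] at ha ha'
    have h3 : n + 1 - cumQ q i ≤ a := le_trans (le_max_right _ _) ha.1
    have h4 : 1 ≤ a := le_trans (le_max_left _ _) ha.1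
    have h2 := ha'.2
    omega
  · ext a
    simp only [Finset.mem_biUnion, Finset.mem_Icc, greedyT]
    constructor
    · rintro ⟨i, hi, ha⟩
      exact ⟨le_trans (le_max_left _ _) ha.1, by omega⟩
    · rintro ⟨h1, h2⟩
      have hex : ∃ i, n + 1 - a ≤ cumQ q i := ⟨k, by omega⟩
      have hfi : n + 1 - a ≤ cumQ q (Nat.find hex) := Nat.find_spec hex
      have hik : Nat.find hex ≤ k := Nat.find_le (by omega)
      have hi1 : 1 ≤ Nat.find hex := by
        rcases Nat.eq_zero_or_pos (Nat.find hex) with h0 | h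
        · exfalso; rw [h0, cumQ_zero] at hfi; omega
        · exact h
      have hlt : ¬ (n + 1 - a ≤ cumQ q (Nat.find hex - 1)) := Nat.find_min hex (by omega)
      exact ⟨Nat.find hex, ⟨hi1, hik⟩, by omega, by omega⟩

lemma counting (n k : ℕ) (x : ℕ → ℝ)
    (hmono : ∀ a b, 1 ≤ a → a ≤ b → b ≤ n → x a ≤ x b)
    (q : ℕ → ℕ) (hq : ∀ i j, 1 ≤ i → i ≤ j → j ≤ k → q j ≤ q i)
    (Sl : ℕ → Finset ℕ) (hS : FeasAlloc n k q Sl)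
    (j : ℕ) (hj1 : 1 ≤ j) (hjk : j ≤ k) (hcn : cumQ q (j-1) + 1 ≤ n) :
    j ≤ ((Finset.Icc 1 k).filter
          (fun i => x (n - cumQ q (j-1)) ≤ maxdest x (Sl i))).card := by
  obtain ⟨hcard, hdisj, hunion⟩ := hS
  set c := cumQ q (j-1) with hc
  set t := x (n - c) with ht
  set I := (Finset.Icc 1 k).filter (fun i => t ≤ maxdest x (Sl i)) with hI
  by_contra hcon
  push_neg at hcon
  have hsubA : Finset.Icc (n - c) n ⊆ I.biUnion Sl := by
    intro a ha
    rw [Finset.mem_Icc] at ha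
    have haIcc : a ∈ Finset.Icc 1 n := Finset.mem_Icc.mpr ⟨by omega, ha.2⟩
    rw [← hunion, Finset.mem_biUnion] at haIcc
    obtain ⟨i, hik, hai⟩ := haIcc
    refine Finset.mem_biUnion.mpr ⟨i, Finset.mem_filter.mpr ⟨hik, ?_⟩, hai⟩
    calc t ≤ x a := hmono (n - c) a (by omega) ha.1 ha.2
    _ ≤ maxdest x (Sl i) := le_maxdest x hai
  have hA : (Finset.Icc (n - c) n).card = c + 1 := by rw [Nat.card_Icc]; omega
  have hcA : (Finset.Icc (n - c) n).card ≤ ∑ i ∈ I, (Sl i).card :=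
    le_trans (Finset.card_le_card hsubA) Finset.card_biUnion_le
  have h1 : ∑ i ∈ I, (Sl i).card ≤ ∑ i ∈ I, q i :=
    Finset.sum_le_sum (fun i hi => hcard i (Finset.mem_filter.mp hi).1)
  have h2 : ∑ i ∈ I, q i ≤ cumQ q I.card :=
    sum_subset_le_cumQ k q hq I.card I (Finset.filter_subset _ _) rfl
  have h3 : cumQ q I.card ≤ c := cumQ_mono q (by omega)
  omega

lemma sorted_countP_le {t : ℝ} (l : List ℝ) (hl : l.Pairwise (· ≥ ·)) :
    ∀ j (hj : j < l.length),
      j + 1 ≤ l.countP (fun v => decide (t ≤ v)) → t ≤ l[j] := by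
  induction l with
  | nil => intro j hj; simp at hj
  | cons a tl ih =>
    have hs := List.pairwise_cons.mp hl
    intro j hj hc
    match j with
    | 0 =>
      simp only [List.getElem_cons_zero]
      by_contra hta
      push_neg at hta
      have h0 : (a :: tl).countP (fun v => decide (t ≤ v)) = 0 := by
        rw [List.countP_eq_zero]
        intro v hv
        simp only [decide_eq_true_eq, not_le]
        rcases List.mem_cons.mp hv with rfl | hv'
        · exact hta
        · exact lt_of_le_of_lt (hs.1 v hv') hta
      omega
    | j + 1 =>
      simp only [List.getElem_cons_succ]
      apply ih hs.2 j (by simpa using hj)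
      rw [List.countP_cons] at hc
      split at hc <;> omega

lemma forall2_sum_le {l₁ l₂ : List ℝ} (h : List.Forall₂ (· ≤ ·) l₁ l₂) :
    l₁.sum ≤ l₂.sum := by
  induction h with
  | nil => exact le_refl 0
  | cons hab _ ih => simpa using add_le_add hab ih

lemma forall2_sum_eq {l₁ l₂ : List ℝ} (h : List.Forall₂ (· ≤ ·) l₁ l₂)
    (hs : l₂.sum ≤ l₁.sum) : l₁ = l₂ := by
  induction h with
  | nil => rfl
  | @cons a b t₁ t₂ hab h ih =>
    have h1 := forall2_sum_le h
    simp only [List.sum_cons] at hs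
    have hab' : a = b := le_antisymm hab (by linarith)
    rw [hab', ih (by linarith)]

lemma icc_val_coe (k : ℕ) : (Finset.Icc 1 k).val = ↑(List.range' 1 k) := by
  rw [Nat.Icc_eq_range']
  simp

lemma icc_val_map (k : ℕ) (f : ℕ → ℝ) :
    (Finset.Icc 1 k).val.map f = ↑((List.range' 1 k).map f) := by
  rw [icc_val_coe, Multiset.map_coe]

lemma icc_sum_eq (k : ℕ) (f : ℕ → ℝ) :
    ∑ i ∈ Finset.Icc 1 k, f i = ((List.range' 1 k).map f).sum := by
  rw [Finset.sum_eq_multiset_sum, icc_val_map, Multiset.sum_coe]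

lemma key (n k : ℕ) (x : ℕ → ℝ)
    (hpos : ∀ a ∈ Finset.Icc 1 n, 0 < x a)
    (hmono : ∀ a b, 1 ≤ a → a ≤ b → b ≤ n → x a ≤ x b)
    (q : ℕ → ℕ) (hq : ∀ i j, 1 ≤ i → i ≤ j → j ≤ k → q j ≤ q i)
    (Sl : ℕ → Finset ℕ) (hS : FeasAlloc n k q Sl) :
    List.Forall₂ (· ≤ ·)
      ((List.range' 1 k).map (fun i => maxdest x (greedyT n q i)))
      (Multiset.sort
        (Multiset.map (fun i => maxdest x (Sl i)) (Finset.Icc 1 k).val) (· ≥ ·)) := by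
  set M := Multiset.map (fun i => maxdest x (Sl i)) (Finset.Icc 1 k).val with hM
  set l := Multiset.sort M (· ≥ ·) with hl
  have hlen : l.length = k := by
    rw [hl, Multiset.length_sort, hM, Multiset.card_map]
    show (Finset.Icc 1 k).card = k
    rw [Nat.card_Icc]; omega
  have hmem : ∀ v ∈ l, 0 ≤ v := by
    intro v hv
    rw [hl, Multiset.mem_sort, hM, Multiset.mem_map] at hv
    obtain ⟨i, hi, rfl⟩ := hv
    refine maxdest_nonneg x n hpos ?_
    rw [← hS.2.2]
    exact Finset.subset_biUnion_of_mem Sl hi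
  apply List.forall₂_of_length_eq_of_get
  · simp [hlen]
  · intro i h1 h2
    simp only [List.get_eq_getElem, List.getElem_map, List.getElem_range', one_mul]
    have hik : i < k := by simpa using h1
    rcases (greedyT n q (1 + i)).eq_empty_or_nonempty with he | hne
    · rw [he, maxdest_empty]
      exact hmem _ (List.getElem_mem _)
    · obtain ⟨a, ha⟩ := hne
      rw [greedyT, Finset.mem_Icc, show 1 + i - 1 = i by omega] at ha
      have ha1 : 1 ≤ a := le_trans (le_max_left _ _) ha.1
      have hcn : cumQ q i + 1 ≤ n := by omega
      have hgv : maxdest x (greedyT n q (1 + i)) = x (n - cumQ q i) := by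
        rw [greedyT, show 1 + i - 1 = i by omega]
        exact maxdest_Icc x n hmono (le_max_left _ _) (le_trans ha.1 ha.2) (by omega)
      rw [hgv]
      have hcount := counting n k x hmono q hq Sl hS (1 + i) (by omega) (by omega)
        (by rw [show 1 + i - 1 = i by omega]; omega)
      rw [show 1 + i - 1 = i by omega] at hcount
      apply sorted_countP_le l (Multiset.pairwise_sort _ _) i (by omega)
      have hcp : l.countP (fun v => decide (x (n - cumQ q i) ≤ v))
          = ((Finset.Icc 1 k).filter
              (fun i0 => x (n - cumQ q i) ≤ maxdest x (Sl i0))).card := by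
        have h0 : Multiset.countP (fun v => x (n - cumQ q i) ≤ v) M
            = l.countP (fun v => decide (x (n - cumQ q i) ≤ v)) := by
          conv_lhs => rw [← Multiset.sort_eq M (· ≥ ·)]
          rw [Multiset.coe_countP]
        rw [← h0, hM, Multiset.countP_map]
        rfl
      omega

/-- the backward greedy allocation is feasible and minimizes the total
cost among all feasible allocations; moreover the multiset (equivalently, the
nonincreasing sequence) of last drop-off points of every socially optimal feasible
allocation coincides with that of the backward greedy allocation. -/
theorem stmt15 (n k : ℕ) (x : ℕ → ℝ)
    (hpos : ∀ a ∈ Finset.Icc 1 n, 0 < x a)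
    (hmono : ∀ a b, 1 ≤ a → a ≤ b → b ≤ n → x a ≤ x b)
    (q : ℕ → ℕ) (hq : ∀ i j, 1 ≤ i → i ≤ j → j ≤ k → q j ≤ q i)
    (hfeas : n ≤ cumQ q k) :
    FeasAlloc n k q (greedyT n q) ∧
    (∀ Sl : ℕ → Finset ℕ, FeasAlloc n k q Sl →
      ∑ i ∈ Finset.Icc 1 k, maxdest x (greedyT n q i)
        ≤ ∑ i ∈ Finset.Icc 1 k, maxdest x (Sl i)) ∧
    (∀ Sl : ℕ → Finset ℕ, FeasAlloc n k q Sl →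
      (∀ Rl : ℕ → Finset ℕ, FeasAlloc n k q Rl →
        ∑ i ∈ Finset.Icc 1 k, maxdest x (Sl i)
          ≤ ∑ i ∈ Finset.Icc 1 k, maxdest x (Rl i)) →
      (Finset.Icc 1 k).val.map (fun i => maxdest x (Sl i))
        = (Finset.Icc 1 k).val.map (fun i => maxdest x (greedyT n q i))) := by
  have hgfeas := greedy_feas n k q hfeas
  have hsum : ∀ Sl : ℕ → Finset ℕ,
      (∑ i ∈ Finset.Icc 1 k, maxdest x (Sl i))
        = (Multiset.sort
            (Multiset.map (fun i => maxdest x (Sl i)) (Finset.Icc 1 k).val) (· ≥ ·)).sum := by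
    intro Sl
    rw [Finset.sum_eq_multiset_sum, ← Multiset.sum_coe, Multiset.sort_eq]
  have hopt2 : ∀ Sl : ℕ → Finset ℕ, FeasAlloc n k q Sl →
      ∑ i ∈ Finset.Icc 1 k, maxdest x (greedyT n q i)
        ≤ ∑ i ∈ Finset.Icc 1 k, maxdest x (Sl i) := by
    intro Sl hS
    have h := forall2_sum_le (key n k x hpos hmono q hq Sl hS)
    rw [hsum Sl, icc_sum_eq]
    exact h
  refine ⟨hgfeas, hopt2, ?_⟩
  intro Sl hS hopt
  have h3 := hopt (greedyT n q) hgfeas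
  have h2 := hopt2 Sl hS
  have hkey := key n k x hpos hmono q hq Sl hS
  have heq : (List.range' 1 k).map (fun i => maxdest x (greedyT n q i))
      = Multiset.sort
          (Multiset.map (fun i => maxdest x (Sl i)) (Finset.Icc 1 k).val) (· ≥ ·) := by
    apply forall2_sum_eq hkey
    rw [← hsum Sl, ← icc_sum_eq]
    exact le_antisymm h3 h2 ▸ le_refl _
  calc (Finset.Icc 1 k).val.map (fun i => maxdest x (Sl i))
      = ↑(Multiset.sort
          (Multiset.map (fun i => maxdest x (Sl i)) (Finset.Icc 1 k).val) (· ≥ ·)) := by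
        rw [Multiset.sort_eq]
    _ = ↑((List.range' 1 k).map (fun i => maxdest x (greedyT n q i))) := by rw [heq]
    _ = (Finset.Icc 1 k).val.map (fun i => maxdest x (greedyT n q i)) := by
        rw [icc_val_map]
end

section
/- (Semilattice property) Fix a star-forest G on the set of destination types. Let Λ_G be the set of size vectors λ ∈ ℤ_{>0}^t such that G together with λ determines an envy-free feasible allocation. Then Λ_G is closed under componentwise maximum: λ, λ' ∈ Λ_G implies λ ∨ λ' ∈ Λ_G; i.e., Λ_G is an upper semilattice. -/
open Finset MeasureTheory ENNReal

/-- A star-forest: all edges go from a smaller to a larger type, every vertex has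
in-degree at most one, and every non-root vertex (i.e. a vertex with an incoming
edge) has out-degree at most one. -/
noncomputable def IsStarForest (E : Finset (ℝ × ℝ)) : Prop :=
  (∀ e ∈ E, e.1 < e.2) ∧
  (∀ z : ℝ, (E.filter fun e => e.2 = z).card ≤ 1) ∧
  (∀ y : ℝ, (∃ e ∈ E, e.2 = y) → (E.filter fun e => e.1 = y).card ≤ 1)

/-- `E` is the allocation graph `G^𝒯` of the allocation `Tl`: `(y,z)` is an edge iff
in some coalition an agent of type `z` drops off immediately after one of type `y`. -/
def AllocGraphEq (xd : ℕ → ℝ) {k : ℕ} (Tl : Fin k → Finset ℕ)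
    (E : Finset (ℝ × ℝ)) : Prop :=
  ∀ y z : ℝ, (y, z) ∈ E ↔
    ∃ i, (∃ a ∈ Tl i, xd a = y) ∧ (∃ a ∈ Tl i, xd a = z) ∧ y < z ∧
      ¬ ∃ a ∈ Tl i, y < xd a ∧ xd a < z

/-- `lam` is the size vector of `Tl` with respect to the components `C`: every
nonempty coalition whose types meet component `C j` has size `lam j`. -/
def SizeVecEq (xd : ℕ → ℝ) {k t : ℕ} (Tl : Fin k → Finset ℕ)
    (C : Fin t → Finset ℝ) (lam : Fin t → ℕ) : Prop :=
  ∀ j : Fin t, ∀ i : Fin k, (Tl i).Nonempty →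
    (∃ a ∈ Tl i, xd a ∈ C j) → (Tl i).card = lam j

/-- `lam ∈ Λ_G`: some envy-free feasible allocation realizes the star-forest `E`
with size vector `lam` (w.r.t. the components `C`). -/
def MemLambdaG (A : Finset ℕ) (xd : ℕ → ℝ) {k t : ℕ} (q : Fin k → ℕ)
    (E : Finset (ℝ × ℝ)) (C : Fin t → Finset ℝ) (lam : Fin t → ℕ) : Prop :=
  ∃ Tl : Fin k → Finset ℕ,
    IsPartition A Tl ∧ Feasible q Tl ∧ EnvyFree xd q Tl ∧
    AllocGraphEq xd Tl E ∧ SizeVecEq xd Tl C lam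

section Helpers
variable (xd : ℕ → ℝ)

lemma nT_mem_le {T : Finset ℕ} {r : ℝ} {a : ℕ} (ha : a ∈ T) (har : r ≤ xd a) :
    1 ≤ nT xd T r := by
  have : a ∈ T.filter fun b => r ≤ xd b := by simp [ha, har]
  exact Finset.card_pos.mpr ⟨a, this⟩

lemma nT_le_card (T : Finset ℕ) (r : ℝ) : nT xd T r ≤ T.card :=
  Finset.card_filter_le _ _

lemma nT_eq_card {T : Finset ℕ} {r : ℝ} (h : ∀ c ∈ T, r ≤ xd c) : nT xd T r = T.card := by
  unfold nT; rw [Finset.filter_true_of_mem h]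

lemma nT_replace {S : Finset ℕ} {a b : ℕ} (ha : a ∉ S) (hb : b ∈ S) (r : ℝ) :
    nT xd (S.erase b ∪ {a}) r
      = nT xd S r - (if r ≤ xd b then 1 else 0) + (if r ≤ xd a then 1 else 0) := by
  classical
  have hd0 : Disjoint (S.erase b) ({a} : Finset ℕ) := by
    rw [Finset.disjoint_singleton_right]
    exact fun h => ha (Finset.mem_of_mem_erase h)
  unfold nT
  rw [Finset.filter_union, Finset.card_union_of_disjoint
    (Finset.disjoint_filter_filter hd0), Finset.filter_erase, Finset.filter_singleton]
  by_cases hbf : r ≤ xd b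
  · have hbmem : b ∈ S.filter fun c => r ≤ xd c := Finset.mem_filter.mpr ⟨hb, hbf⟩
    rw [Finset.card_erase_of_mem hbmem]
    by_cases haf : r ≤ xd a <;> simp [haf, hbf]
  · have hbn : b ∉ S.filter fun c => r ≤ xd c := by simp [hbf]
    rw [Finset.erase_eq_of_notMem hbn]
    by_cases haf : r ≤ xd a <;> simp [haf, hbf]

lemma phi_mono_nT {S T : Finset ℕ} {y : ℝ}
    (h : ∀ r, 0 < r → r ≤ y → nT xd T r ≤ nT xd S r) :
    phi xd S y ≤ phi xd T y := by
  unfold phi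
  rw [← lintegral_indicator measurableSet_Ioc, ← lintegral_indicator measurableSet_Ioc]
  refine lintegral_mono fun r => ?_
  by_cases hr : r ∈ Set.Ioc (0:ℝ) y
  · rw [Set.indicator_of_mem hr, Set.indicator_of_mem hr]
    exact ENNReal.inv_le_inv.mpr (by exact_mod_cast h r hr.1 hr.2)
  · rw [Set.indicator_of_notMem hr, Set.indicator_of_notMem hr]

lemma phi_congr_nT {S T : Finset ℕ} {y : ℝ}
    (h : ∀ r, 0 < r → r ≤ y → nT xd T r = nT xd S r) :
    phi xd S y = phi xd T y :=
  le_antisymm (phi_mono_nT xd fun r h1 h2 => (h r h1 h2).le)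
    (phi_mono_nT xd fun r h1 h2 => (h r h1 h2).ge)

lemma phi_eq_const {T : Finset ℕ} {m : ℕ} {y : ℝ} (hy : 0 ≤ y)
    (h : ∀ r, 0 < r → r ≤ y → nT xd T r = m) :
    phi xd T y = (m : ℝ≥0∞)⁻¹ * ENNReal.ofReal y := by
  unfold phi
  rw [← lintegral_indicator measurableSet_Ioc]
  have : (Set.Ioc (0:ℝ) y).indicator (fun r => ((nT xd T r : ℝ≥0∞))⁻¹)
      = (Set.Ioc (0:ℝ) y).indicator (fun _ => (m : ℝ≥0∞)⁻¹) := by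
    funext r
    by_cases hr : r ∈ Set.Ioc (0:ℝ) y
    · rw [Set.indicator_of_mem hr, Set.indicator_of_mem hr, h r hr.1 hr.2]
    · rw [Set.indicator_of_notMem hr, Set.indicator_of_notMem hr]
  rw [this, lintegral_indicator measurableSet_Ioc, setLIntegral_const, Real.volume_Ioc,
    sub_zero]

lemma phi_le_ofReal {T : Finset ℕ} {y : ℝ}
    (h : ∀ r, 0 < r → r ≤ y → 1 ≤ nT xd T r) :
    phi xd T y ≤ ENNReal.ofReal y := by
  unfold phi
  calc ∫⁻ r in Set.Ioc (0:ℝ) y, (nT xd T r : ℝ≥0∞)⁻¹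
      ≤ ∫⁻ _ in Set.Ioc (0:ℝ) y, (1:ℝ≥0∞) := by
        rw [← lintegral_indicator measurableSet_Ioc, ← lintegral_indicator measurableSet_Ioc]
        refine lintegral_mono fun r => ?_
        by_cases hr : r ∈ Set.Ioc (0:ℝ) y
        · rw [Set.indicator_of_mem hr, Set.indicator_of_mem hr]
          exact ENNReal.inv_le_one.mpr (by exact_mod_cast h r hr.1 hr.2)
        · rw [Set.indicator_of_notMem hr, Set.indicator_of_notMem hr]
    _ = ENNReal.ofReal y := by
        rw [setLIntegral_const, one_mul, Real.volume_Ioc, sub_zero]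

lemma cast_inv_ofReal {n : ℕ} (hk : n ≠ 0) :
    ((n : ℝ≥0∞))⁻¹ = ENNReal.ofReal ((n:ℝ))⁻¹ := by
  have : (0:ℝ) < n := by exact_mod_cast Nat.pos_of_ne_zero hk
  rw [ENNReal.ofReal_inv_of_pos this, ENNReal.ofReal_natCast]

lemma inv_succ_add_le {n M : ℕ} (h1 : 1 ≤ n) (h2 : n ≤ M) :
    ((n+1 : ℕ) : ℝ≥0∞)⁻¹ + ((M*(M+1) : ℕ) : ℝ≥0∞)⁻¹ ≤ ((n : ℕ) : ℝ≥0∞)⁻¹ := by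
  have hn : (0:ℝ) < n := by exact_mod_cast h1
  rw [cast_inv_ofReal (by omega), cast_inv_ofReal (Nat.mul_ne_zero (by omega) (by omega)),
    cast_inv_ofReal (by omega), ← ENNReal.ofReal_add (by positivity) (by positivity)]
  refine ENNReal.ofReal_le_ofReal ?_
  push_cast
  have key : ((n:ℝ))⁻¹ = ((n:ℝ)+1)⁻¹ + ((n:ℝ)*((n:ℝ)+1))⁻¹ := by
    field_simp
  rw [key]
  have hle : ((M:ℝ)*((M:ℝ)+1))⁻¹ ≤ ((n:ℝ)*((n:ℝ)+1))⁻¹ := by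
    apply inv_anti₀ (by positivity)
    have : (n:ℝ) ≤ M := by exact_mod_cast h2
    nlinarith
  linarith

lemma phi_replace_lt {U V : Finset ℕ} {p w : ℝ} (hp : 0 < p) (hpw : p < w)
    (hub : ∀ r, 0 < r → r ≤ w → 1 ≤ nT xd U r)
    (hV1 : ∀ r, 0 < r → r ≤ p → nT xd V r = nT xd U r)
    (hV2 : ∀ r, p < r → r ≤ w → nT xd V r = nT xd U r + 1) :
    phi xd V w < phi xd U w := by
  classical
  set M := U.card with hM
  have hM1 : 1 ≤ M := le_trans (hub w (hp.trans hpw) le_rfl) (nT_le_card xd U w)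
  set c : ℝ≥0∞ := ((M*(M+1) : ℕ) : ℝ≥0∞)⁻¹ with hc
  have hcne : c ≠ 0 := by
    rw [hc]
    exact ENNReal.inv_ne_zero.mpr (ENNReal.natCast_ne_top _)
  -- pointwise bound
  have hpt : ∀ r, (Set.Ioc (0:ℝ) w).indicator (fun r => ((nT xd V r : ℝ≥0∞))⁻¹) r
      + (Set.Ioc p w).indicator (fun _ => c) r
      ≤ (Set.Ioc (0:ℝ) w).indicator (fun r => ((nT xd U r : ℝ≥0∞))⁻¹) r := by
    intro r
    by_cases hr : r ∈ Set.Ioc (0:ℝ) w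
    · rw [Set.indicator_of_mem hr, Set.indicator_of_mem hr]
      by_cases hr2 : r ∈ Set.Ioc p w
      · rw [Set.indicator_of_mem hr2]
        have h2 := hV2 r hr2.1 hr2.2
        have h3 := hub r hr.1 hr.2
        have h4 : nT xd U r ≤ M := nT_le_card xd U r
        rw [h2]
        have := inv_succ_add_le (n := nT xd U r) (M := M) h3 h4
        exact_mod_cast this
      · rw [Set.indicator_of_notMem hr2]
        have hrp : r ≤ p := by
          by_contra hcon
          exact hr2 ⟨lt_of_not_ge hcon, hr.2⟩
        rw [add_zero, hV1 r hr.1 hrp]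
    · rw [Set.indicator_of_notMem hr, Set.indicator_of_notMem hr]
      have : ¬ r ∈ Set.Ioc p w := fun hcon => hr ⟨hp.trans hcon.1, hcon.2⟩
      rw [Set.indicator_of_notMem this, add_zero]
  have hint : phi xd V w + c * ENNReal.ofReal (w - p) ≤ phi xd U w := by
    have hmeas : Measurable ((Set.Ioc p w).indicator (fun _ => c)) :=
      measurable_const.indicator measurableSet_Ioc
    calc phi xd V w + c * ENNReal.ofReal (w - p)
        = (∫⁻ r, (Set.Ioc (0:ℝ) w).indicator (fun r => ((nT xd V r : ℝ≥0∞))⁻¹) r)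
          + ∫⁻ r, (Set.Ioc p w).indicator (fun _ => c) r := by
          unfold phi
          rw [lintegral_indicator measurableSet_Ioc, lintegral_indicator measurableSet_Ioc,
            setLIntegral_const, Real.volume_Ioc]
      _ = ∫⁻ r, ((Set.Ioc (0:ℝ) w).indicator (fun r => ((nT xd V r : ℝ≥0∞))⁻¹) r
          + (Set.Ioc p w).indicator (fun _ => c) r) := by
          rw [lintegral_add_right _ hmeas]
      _ ≤ ∫⁻ r, (Set.Ioc (0:ℝ) w).indicator (fun r => ((nT xd U r : ℝ≥0∞))⁻¹) r :=
          lintegral_mono hpt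
      _ = phi xd U w := by
          unfold phi
          rw [lintegral_indicator measurableSet_Ioc]
  have hVfin : phi xd V w ≠ ⊤ := by
    have h1 : phi xd V w ≤ ENNReal.ofReal w := by
      apply phi_le_ofReal
      intro r h1 h2
      by_cases hrp : r ≤ p
      · rw [hV1 r h1 hrp]; exact hub r h1 h2
      · rw [hV2 r (lt_of_not_ge hrp) h2]; omega
    exact ne_top_of_le_ne_top ENNReal.ofReal_ne_top h1
  have heps : c * ENNReal.ofReal (w - p) ≠ 0 := by
    refine mul_ne_zero hcne ?_
    simp only [ne_eq, ENNReal.ofReal_eq_zero, not_le]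
    linarith
  calc phi xd V w < phi xd V w + c * ENNReal.ofReal (w - p) :=
        ENNReal.lt_add_right hVfin heps
    _ ≤ phi xd U w := hint

end Helpers

section Graph
variable (A : Finset ℕ) (xd : ℕ → ℝ) (E : Finset (ℝ × ℝ))

/-- The set of incoming (well-formed) edges into `u`. -/
noncomputable def predSet (u : ℝ) : Finset (ℝ × ℝ) :=
  E.filter fun e => e.2 = u ∧ e.1 < u ∧ e.1 ∈ A.image xd

lemma predSet_mem {u : ℝ} {e : ℝ × ℝ} (he : e ∈ predSet A xd E u) :
    e ∈ E ∧ e.2 = u ∧ e.1 < u ∧ e.1 ∈ A.image xd := by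
  simpa [predSet] using he

noncomputable def rootF (u : ℝ) : ℝ :=
  if h : (predSet A xd E u).Nonempty then rootF h.choose.1 else u
termination_by ((A.image xd).filter (fun v => v < u)).card
decreasing_by
  obtain ⟨-, h2, h3, h4⟩ := predSet_mem A xd E h.choose_spec
  apply Finset.card_lt_card
  refine ⟨fun x hx => ?_, fun hall => ?_⟩
  · rw [Finset.mem_filter] at hx ⊢
    exact ⟨hx.1, hx.2.trans h3⟩
  · have hmem : h.choose.1 ∈ (A.image xd).filter (fun v => v < u) :=
      Finset.mem_filter.mpr ⟨h4, h3⟩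
    have := Finset.mem_filter.mp (hall hmem)
    exact lt_irrefl _ this.2

noncomputable def ancF (u : ℝ) : ℝ :=
  if h : (predSet A xd E u).Nonempty then
    (if h2 : (predSet A xd E h.choose.1).Nonempty then ancF h.choose.1 else u)
  else u
termination_by ((A.image xd).filter (fun v => v < u)).card
decreasing_by
  obtain ⟨-, h3, h4, h5⟩ := predSet_mem A xd E h.choose_spec
  apply Finset.card_lt_card
  refine ⟨fun x hx => ?_, fun hall => ?_⟩
  · rw [Finset.mem_filter] at hx ⊢
    exact ⟨hx.1, hx.2.trans h4⟩
  · have hmem : h.choose.1 ∈ (A.image xd).filter (fun v => v < u) :=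
      Finset.mem_filter.mpr ⟨h5, h4⟩
    have := Finset.mem_filter.mp (hall hmem)
    exact lt_irrefl _ this.2

variable {A xd E}

lemma predSet_nonempty_of_mem (hWF : ∀ e ∈ E, e.1 < e.2 ∧ e.1 ∈ A.image xd)
    {p u : ℝ} (h : (p, u) ∈ E) :
    (predSet A xd E u).Nonempty :=
  ⟨(p, u), Finset.mem_filter.mpr ⟨h, rfl, (hWF _ h).1, (hWF _ h).2⟩⟩

lemma pred_unique (hIndeg : ∀ z : ℝ, (E.filter fun e => e.2 = z).card ≤ 1)
    {p p' u : ℝ} (h : (p, u) ∈ E) (h' : (p', u) ∈ E) : p = p' := by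
  have h1 : (p, u) ∈ E.filter fun e => e.2 = u := Finset.mem_filter.mpr ⟨h, rfl⟩
  have h2 : (p', u) ∈ E.filter fun e => e.2 = u := Finset.mem_filter.mpr ⟨h', rfl⟩
  have := Finset.card_le_one.mp (hIndeg u) _ h1 _ h2
  exact congrArg Prod.fst this

lemma choose_pred (hWF : ∀ e ∈ E, e.1 < e.2 ∧ e.1 ∈ A.image xd)
    (hIndeg : ∀ z : ℝ, (E.filter fun e => e.2 = z).card ≤ 1) {p u : ℝ} (hpu : (p, u) ∈ E) (h : (predSet A xd E u).Nonempty) :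
    h.choose.1 = p := by
  obtain ⟨he, h2, -, -⟩ := predSet_mem A xd E h.choose_spec
  have : (h.choose.1, u) ∈ E := by
    have : h.choose = (h.choose.1, h.choose.2) := rfl
    rw [this, h2] at he
    exact he
  exact pred_unique hIndeg this hpu

lemma rootF_no_pred {u : ℝ} (h : ¬ (predSet A xd E u).Nonempty) :
    rootF A xd E u = u := by
  rw [rootF, dif_neg h]

lemma rootF_edge (hWF : ∀ e ∈ E, e.1 < e.2 ∧ e.1 ∈ A.image xd)
    (hIndeg : ∀ z : ℝ, (E.filter fun e => e.2 = z).card ≤ 1) {p u : ℝ} (hpu : (p, u) ∈ E) :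
    rootF A xd E u = rootF A xd E p := by
  have h := predSet_nonempty_of_mem hWF hpu
  conv_lhs => rw [rootF]
  rw [dif_pos h, choose_pred hWF hIndeg hpu h]

lemma rootF_connected (hWF : ∀ e ∈ E, e.1 < e.2 ∧ e.1 ∈ A.image xd)
    (hIndeg : ∀ z : ℝ, (E.filter fun e => e.2 = z).card ≤ 1) {u v : ℝ}
    (h : Relation.ReflTransGen (fun a b : ℝ => (a, b) ∈ E ∨ (b, a) ∈ E) u v) :
    rootF A xd E u = rootF A xd E v := by
  induction h with
  | refl => rfl
  | @tail b c _ hbc ih =>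
      rcases hbc with h1 | h1
      · rw [ih, rootF_edge hWF hIndeg h1]
      · rw [ih, ← rootF_edge hWF hIndeg h1]

lemma ancF_no_pred {u : ℝ} (h : ¬ (predSet A xd E u).Nonempty) :
    ancF A xd E u = u := by
  rw [ancF, dif_neg h]

lemma ancF_pred_root (hWF : ∀ e ∈ E, e.1 < e.2 ∧ e.1 ∈ A.image xd)
    (hIndeg : ∀ z : ℝ, (E.filter fun e => e.2 = z).card ≤ 1) {p u : ℝ} (hpu : (p, u) ∈ E)
    (hp : ¬ (predSet A xd E p).Nonempty) : ancF A xd E u = u := by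
  have h := predSet_nonempty_of_mem hWF hpu
  conv_lhs => rw [ancF]
  rw [dif_pos h]
  have hc := choose_pred hWF hIndeg hpu h
  rw [dif_neg (hc ▸ hp)]

lemma ancF_pred_step (hWF : ∀ e ∈ E, e.1 < e.2 ∧ e.1 ∈ A.image xd)
    (hIndeg : ∀ z : ℝ, (E.filter fun e => e.2 = z).card ≤ 1) {p u : ℝ} (hpu : (p, u) ∈ E)
    (hp : (predSet A xd E p).Nonempty) : ancF A xd E u = ancF A xd E p := by
  have h := predSet_nonempty_of_mem hWF hpu
  conv_lhs => rw [ancF]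
  rw [dif_pos h]
  have hc := choose_pred hWF hIndeg hpu h
  rw [dif_pos (hc ▸ hp)]
  rw [hc]

end Graph

section Alloc

/-- Bundle of the fixed-context hypotheses. -/
structure Ctx (A : Finset ℕ) (xd : ℕ → ℝ) {t : ℕ} (E : Finset (ℝ × ℝ))
    (C : Fin t → Finset ℝ) : Prop where
  posx : ∀ a ∈ A, 0 < xd a
  star1 : ∀ e ∈ E, e.1 < e.2
  indeg : ∀ z : ℝ, (E.filter fun e => e.2 = z).card ≤ 1
  Cdisj : ∀ j j' : Fin t, j ≠ j' → Disjoint (C j) (C j')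
  Ccover : ∀ y : ℝ, (∃ j, y ∈ C j) ↔ ∃ a ∈ A, xd a = y
  Cedge : ∀ e ∈ E, ∀ j : Fin t, e.1 ∈ C j ↔ e.2 ∈ C j
  Cconn : ∀ j : Fin t, ∀ y ∈ C j, ∀ z ∈ C j,
    Relation.ReflTransGen (fun u v : ℝ => (u, v) ∈ E ∨ (v, u) ∈ E) y z

/-- Bundle of an envy-free feasible allocation realizing `E` with sizes `lam`. -/
structure GA (A : Finset ℕ) (xd : ℕ → ℝ) {k t : ℕ} (q : Fin k → ℕ)
    (E : Finset (ℝ × ℝ)) (C : Fin t → Finset ℝ) where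
  Tl : Fin k → Finset ℕ
  lam : Fin t → ℕ
  part : IsPartition A Tl
  feas : Feasible q Tl
  ef : EnvyFree xd q Tl
  graph : AllocGraphEq xd Tl E
  size : SizeVecEq xd Tl C lam
  hlam : ∀ j, 0 < lam j

namespace GA

variable {A : Finset ℕ} {xd : ℕ → ℝ} {k t : ℕ} {q : Fin k → ℕ}
  {E : Finset (ℝ × ℝ)} {C : Fin t → Finset ℝ}
  (H : Ctx A xd E C) (G : GA A xd q E C)

include H G

lemma subA (i : Fin k) : G.Tl i ⊆ A := fun a ha => by
  rw [← G.part.2]; exact Finset.mem_biUnion.mpr ⟨i, Finset.mem_univ _, ha⟩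

lemma mem_unique {a : ℕ} {i i' : Fin k} (h : a ∈ G.Tl i) (h' : a ∈ G.Tl i') : i = i' := by
  by_contra hne
  exact (Finset.disjoint_left.mp (G.part.1 i i' hne) h) h'

lemma exists_idx {a : ℕ} (ha : a ∈ A) : ∃ i, a ∈ G.Tl i := by
  rw [← G.part.2] at ha
  obtain ⟨i, -, h⟩ := Finset.mem_biUnion.mp ha
  exact ⟨i, h⟩

lemma wf : ∀ e ∈ E, e.1 < e.2 ∧ e.1 ∈ A.image xd := by
  intro e he
  refine ⟨H.star1 e he, ?_⟩
  obtain ⟨i, ⟨u, hu, hxu⟩, -, -, -⟩ := (G.graph e.1 e.2).mp (by simpa using he)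
  exact Finset.mem_image.mpr ⟨u, G.subA H i hu, hxu⟩

/-- in a coalition, the next type above `xd a` below `xd b` is an edge target. -/
lemma step {i : Fin k} {a b : ℕ} (ha : a ∈ G.Tl i) (hb : b ∈ G.Tl i)
    (hab : xd a < xd b) :
    ∃ c ∈ G.Tl i, xd a < xd c ∧ xd c ≤ xd b ∧ (xd a, xd c) ∈ E := by
  classical
  set s := (G.Tl i).filter (fun e => xd a < xd e ∧ xd e ≤ xd b) with hs
  have hsne : s.Nonempty := ⟨b, Finset.mem_filter.mpr ⟨hb, hab, le_rfl⟩⟩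
  obtain ⟨c, hcs, hcmin⟩ := Finset.exists_min_image s xd hsne
  obtain ⟨hci, hc1, hc2⟩ := Finset.mem_filter.mp hcs
  refine ⟨c, hci, hc1, hc2, ?_⟩
  refine (G.graph _ _).mpr ⟨i, ⟨a, ha, rfl⟩, ⟨c, hci, rfl⟩, hc1, ?_⟩
  rintro ⟨d, hd, hd1, hd2⟩
  have hds : d ∈ s := Finset.mem_filter.mpr ⟨hd, hd1, le_of_lt (hd2.trans_le hc2)⟩
  exact absurd (hcmin d hds) (not_le.mpr hd2)

/-- all types of a coalition lie in the same component (upward direction). -/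
lemma up_comp {j : Fin t} : ∀ n : ℕ, ∀ i : Fin k, ∀ a b : ℕ, a ∈ G.Tl i → b ∈ G.Tl i →
    xd a ≤ xd b → ((G.Tl i).filter (fun e => xd a < xd e ∧ xd e ≤ xd b)).card = n →
    xd a ∈ C j → xd b ∈ C j := by
  intro n
  induction n using Nat.strong_induction_on with
  | _ n IH =>
    intro i a b ha hb hab hcard haC
    rcases eq_or_lt_of_le hab with heq | hlt
    · rwa [← heq]
    · obtain ⟨c, hci, hc1, hc2, hedge⟩ := G.step H ha hb hlt
      have hcC : xd c ∈ C j := (H.Cedge _ hedge j).mp haC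
      have hsub : ((G.Tl i).filter (fun e => xd c < xd e ∧ xd e ≤ xd b)) ⊆
          ((G.Tl i).filter (fun e => xd a < xd e ∧ xd e ≤ xd b)) := by
        intro x hx
        rw [Finset.mem_filter] at hx ⊢
        exact ⟨hx.1, hc1.trans hx.2.1, hx.2.2⟩
      have hmem : c ∈ (G.Tl i).filter (fun e => xd a < xd e ∧ xd e ≤ xd b) :=
        Finset.mem_filter.mpr ⟨hci, hc1, hc2⟩
      have hnot : c ∉ (G.Tl i).filter (fun e => xd c < xd e ∧ xd e ≤ xd b) := by
        simp [Finset.mem_filter]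
      have hlt2 : ((G.Tl i).filter (fun e => xd c < xd e ∧ xd e ≤ xd b)).card < n := by
        rw [← hcard]
        exact Finset.card_lt_card ⟨hsub, fun hall => hnot (hall hmem)⟩
      exact IH _ hlt2 i c b hci hb hc2 rfl hcC

lemma comp_closed {j : Fin t} {i : Fin k} {a b : ℕ} (ha : a ∈ G.Tl i) (hb : b ∈ G.Tl i)
    (haC : xd a ∈ C j) : xd b ∈ C j := by
  rcases le_or_gt (xd a) (xd b) with h | h
  · exact G.up_comp H _ i a b ha hb h rfl haC
  · obtain ⟨j', hj'⟩ := (H.Ccover (xd b)).mpr ⟨b, G.subA H i hb, rfl⟩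
    have haC' : xd a ∈ C j' := G.up_comp H _ i b a hb ha h.le rfl hj'
    have : j' = j := by
      by_contra hne
      exact (Finset.disjoint_left.mp (H.Cdisj j' j hne) haC') haC
    rwa [← this]

end GA
end Alloc

section Helpers2
variable (xd : ℕ → ℝ)

lemma nT_replace_same {S : Finset ℕ} {a b : ℕ} (ha : a ∉ S) (hb : b ∈ S)
    (hx : xd a = xd b) (r : ℝ) : nT xd (S.erase b ∪ {a}) r = nT xd S r := by
  rw [nT_replace xd ha hb]
  by_cases hrb : r ≤ xd b
  · have h1 : 1 ≤ nT xd S r := nT_mem_le xd hb hrb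
    rw [if_pos hrb, if_pos (hx ▸ hrb)]
    omega
  · rw [if_neg hrb, if_neg (hx ▸ hrb)]
    omega

lemma nT_replace_low {S : Finset ℕ} {a b : ℕ} (ha : a ∉ S) (hb : b ∈ S)
    {r : ℝ} (hrb : r ≤ xd b) (hra : r ≤ xd a) :
    nT xd (S.erase b ∪ {a}) r = nT xd S r := by
  rw [nT_replace xd ha hb, if_pos hrb, if_pos hra]
  have h1 : 1 ≤ nT xd S r := nT_mem_le xd hb hrb
  omega

lemma nT_replace_high {S : Finset ℕ} {a b : ℕ} (ha : a ∉ S) (hb : b ∈ S)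
    {r : ℝ} (hrb : ¬ r ≤ xd b) (hra : r ≤ xd a) :
    nT xd (S.erase b ∪ {a}) r = nT xd S r + 1 := by
  rw [nT_replace xd ha hb, if_neg hrb, if_pos hra]
  omega

end Helpers2

namespace GA

variable {A : Finset ℕ} {xd : ℕ → ℝ} {k t : ℕ} {q : Fin k → ℕ}
  {E : Finset (ℝ × ℝ)} {C : Fin t → Finset ℝ}
  (H : Ctx A xd E C) (G : GA A xd q E C)

include H G

lemma notin_other {a : ℕ} {i i' : Fin k} (ha : a ∈ G.Tl i) (hne : i ≠ i') :
    a ∉ G.Tl i' := fun h => hne (G.mem_unique H ha h)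

lemma ef_phi {i i' : Fin k} (hne : i ≠ i') {a b : ℕ} (ha : a ∈ G.Tl i) (hb : b ∈ G.Tl i') :
    phi xd (G.Tl i) (xd a) ≤ phi xd ((G.Tl i').erase b ∪ {a}) (xd a) := by
  have h := G.ef i i' hne a ha b hb
  unfold taxiCost at h
  rw [if_pos (G.feas i)] at h
  have hanotin : a ∉ (G.Tl i').erase b := fun hmem =>
    (G.notin_other H ha hne) (Finset.mem_of_mem_erase hmem)
  have hcard : ((G.Tl i').erase b ∪ {a}).card = (G.Tl i').card := by
    rw [Finset.card_union_of_disjoint (Finset.disjoint_singleton_right.mpr hanotin),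
      Finset.card_erase_of_mem hb, Finset.card_singleton]
    have : 1 ≤ (G.Tl i').card := Finset.card_pos.mpr ⟨b, hb⟩
    omega
  rw [if_pos (le_of_eq_of_le hcard (G.feas i'))] at h
  exact h

lemma swap_phi {i i' : Fin k} (hne : i ≠ i') {a b : ℕ} (ha : a ∈ G.Tl i)
    (hb : b ∈ G.Tl i') (hxeq : xd a = xd b) :
    phi xd (G.Tl i) (xd a) = phi xd (G.Tl i') (xd a) := by
  have key : ∀ (i1 i2 : Fin k) (a1 a2 : ℕ), i1 ≠ i2 → a1 ∈ G.Tl i1 → a2 ∈ G.Tl i2 →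
      xd a1 = xd a2 → phi xd (G.Tl i1) (xd a1) ≤ phi xd (G.Tl i2) (xd a1) := by
    intro i1 i2 a1 a2 hne12 h1 h2 hx12
    refine le_trans (G.ef_phi H hne12 h1 h2) (le_of_eq ?_)
    exact (phi_congr_nT xd (fun r _ _ =>
      (nT_replace_same xd (G.notin_other H h1 hne12) h2 hx12 r))).symm
  refine le_antisymm (key i i' a b hne ha hb hxeq) ?_
  have := key i' i b a (Ne.symm hne) hb ha hxeq.symm
  rwa [hxeq]

/-- All agents of a fixed non-root type ride in the same coalition,
which also contains an agent at the predecessor type. -/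
lemma type_coalition {p w : ℝ} (hpw : (p, w) ∈ E) :
    ∃ i0 : Fin k, (∃ u ∈ G.Tl i0, xd u = p) ∧ (∃ v ∈ G.Tl i0, xd v = w) ∧
      ∀ a ∈ A, xd a = w → a ∈ G.Tl i0 := by
  obtain ⟨i0, ⟨u, hu, hxu⟩, ⟨v, hv, hxv⟩, hplt, -⟩ := (G.graph p w).mp hpw
  refine ⟨i0, ⟨u, hu, hxu⟩, ⟨v, hv, hxv⟩, ?_⟩
  intro a haA hxa
  obtain ⟨i, hi⟩ := G.exists_idx H haA
  suffices h : i = i0 by rwa [← h]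
  by_contra hne
  have hppos : 0 < p := hxu ▸ H.posx u (G.subA H i0 hu)
  have hanotin : a ∉ G.Tl i0 := G.notin_other H hi hne
  have hstrict : phi xd ((G.Tl i0).erase u ∪ {a}) w < phi xd (G.Tl i0) w := by
    refine phi_replace_lt xd hppos hplt ?_ ?_ ?_
    · exact fun r _ hr => nT_mem_le xd hv (le_of_le_of_eq hr hxv.symm)
    · exact fun r _ hr => nT_replace_low xd hanotin hu
        (le_of_le_of_eq hr hxu.symm) (le_of_le_of_eq (hr.trans hplt.le) hxa.symm)
    · exact fun r hr hr2 => nT_replace_high xd hanotin hu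
        (hxu ▸ not_le.mpr hr) (le_of_le_of_eq hr2 hxa.symm)
  have hswap : phi xd (G.Tl i) w = phi xd (G.Tl i0) w := by
    have := G.swap_phi H hne hi hv (by rw [hxa, hxv])
    rwa [hxa] at this
  have hef : phi xd (G.Tl i) w ≤ phi xd ((G.Tl i0).erase u ∪ {a}) w := by
    have := G.ef_phi H hne hi hu
    rwa [hxa] at this
  have := (hef.trans_lt hstrict).trans_eq hswap.symm
  exact lt_irrefl _ this

lemma root_no_pred {j : Fin t} (hj : (C j).Nonempty) :
    ¬ (predSet A xd E ((C j).min' hj)).Nonempty := by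
  rintro ⟨e, he⟩
  obtain ⟨heE, he2, he1, -⟩ := predSet_mem A xd E he
  have h3 : e.1 ∈ C j := (H.Cedge e heE j).mpr (he2 ▸ Finset.min'_mem _ hj)
  exact absurd (Finset.min'_le _ _ h3) (not_le.mpr (he2 ▸ he1))

lemma comp_pred {j : Fin t} (hj : (C j).Nonempty) {u : ℝ} (hu : u ∈ C j)
    (hne : u ≠ (C j).min' hj) : (predSet A xd E u).Nonempty := by
  by_contra h
  have h1 : rootF A xd E u = u := rootF_no_pred h
  have h2 : rootF A xd E ((C j).min' hj) = (C j).min' hj :=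
    rootF_no_pred (G.root_no_pred H hj)
  have h3 := rootF_connected (G.wf H) H.indeg (H.Cconn j u hu _ (Finset.min'_mem _ hj))
  exact hne (by rw [← h1, h3, h2])

end GA

section GraphMore
variable {A : Finset ℕ} {xd : ℕ → ℝ} {E : Finset (ℝ × ℝ)}

lemma measure_lt {p w : ℝ} (hpw : p < w) (hp : p ∈ A.image xd) :
    ((A.image xd).filter (· < p)).card < ((A.image xd).filter (· < w)).card := by
  apply Finset.card_lt_card
  refine ⟨fun x hx => ?_, fun hall => ?_⟩
  · rw [Finset.mem_filter] at hx ⊢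
    exact ⟨hx.1, hx.2.trans hpw⟩
  · have hmem : p ∈ (A.image xd).filter (· < w) := Finset.mem_filter.mpr ⟨hp, hpw⟩
    exact lt_irrefl _ (Finset.mem_filter.mp (hall hmem)).2

lemma predSet_edge {u : ℝ} {e : ℝ × ℝ} (he : e ∈ predSet A xd E u) :
    (e.1, u) ∈ E ∧ e.1 < u ∧ e.1 ∈ A.image xd := by
  obtain ⟨heE, he2, he1, him⟩ := predSet_mem A xd E he
  refine ⟨?_, he2 ▸ he1, him⟩
  have h3 : (e.1, e.2) ∈ E := by rwa [Prod.mk.eta]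
  rwa [he2] at h3

end GraphMore

namespace GA

variable {A : Finset ℕ} {xd : ℕ → ℝ} {k t : ℕ} {q : Fin k → ℕ}
  {E : Finset (ℝ × ℝ)} {C : Fin t → Finset ℝ}
  (H : Ctx A xd E C) (G : GA A xd q E C)

include H G

lemma anc_mem {j : Fin t} (hj : (C j).Nonempty) : ∀ n : ℕ, ∀ w : ℝ,
    ((A.image xd).filter (· < w)).card = n → w ∈ C j → w ≠ (C j).min' hj →
    ancF A xd E w ∈ C j ∧ ancF A xd E w ≠ (C j).min' hj := by
  intro n
  induction n using Nat.strong_induction_on with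
  | _ n IH =>
  intro w hcard hwC hwne
  obtain ⟨e, he⟩ := G.comp_pred H hj hwC hwne
  obtain ⟨hedge, hlt, him⟩ := predSet_edge he
  by_cases hpp : (predSet A xd E e.1).Nonempty
  · rw [ancF_pred_step (G.wf H) H.indeg hedge hpp]
    have hpC : e.1 ∈ C j := (H.Cedge (e.1, w) hedge j).mpr hwC
    have hpne : e.1 ≠ (C j).min' hj := fun hc => G.root_no_pred H hj (hc ▸ hpp)
    exact IH _ (hcard ▸ measure_lt hlt him) e.1 rfl hpC hpne
  · rw [ancF_pred_root (G.wf H) H.indeg hedge hpp]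
    exact ⟨hwC, hwne⟩

lemma anc_coalition {j : Fin t} (hj : (C j).Nonempty) : ∀ n : ℕ, ∀ w : ℝ,
    ((A.image xd).filter (· < w)).card = n → w ∈ C j → w ≠ (C j).min' hj →
    ∀ a ∈ A, xd a = w → ∀ b ∈ A, xd b = ancF A xd E w →
    ∃ i, a ∈ G.Tl i ∧ b ∈ G.Tl i := by
  intro n
  induction n using Nat.strong_induction_on with
  | _ n IH =>
  intro w hcard hwC hwne a haA hxa b hbA hxb
  obtain ⟨e, he⟩ := G.comp_pred H hj hwC hwne
  obtain ⟨hedge, hlt, him⟩ := predSet_edge he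
  by_cases hpp : (predSet A xd E e.1).Nonempty
  · have hancw : ancF A xd E w = ancF A xd E e.1 :=
      ancF_pred_step (G.wf H) H.indeg hedge hpp
    have hpC : e.1 ∈ C j := (H.Cedge (e.1, w) hedge j).mpr hwC
    have hpne : e.1 ≠ (C j).min' hj := fun hc => G.root_no_pred H hj (hc ▸ hpp)
    obtain ⟨u, huA, hxu⟩ := (H.Ccover e.1).mp ⟨j, hpC⟩
    obtain ⟨i1, hu1, hb1⟩ := IH _ (hcard ▸ measure_lt hlt him) e.1 rfl hpC hpne
      u huA hxu b hbA (by rw [hxb, hancw])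
    obtain ⟨i0, ⟨u', hu', hxu'⟩, -, hall0⟩ := G.type_coalition H hedge
    have haI : a ∈ G.Tl i0 := hall0 a haA hxa
    obtain ⟨e2, he2'⟩ := hpp
    obtain ⟨hedge2, -, -⟩ := predSet_edge he2'
    obtain ⟨i2, -, -, hall2⟩ := G.type_coalition H hedge2
    have h1 : u ∈ G.Tl i2 := hall2 u huA hxu
    have h2 : u' ∈ G.Tl i2 := hall2 u' (G.subA H i0 hu') hxu'
    have e1 : i1 = i2 := G.mem_unique H hu1 h1
    have e2eq : i0 = i2 := G.mem_unique H hu' h2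
    refine ⟨i0, haI, ?_⟩
    rw [e2eq, ← e1]
    exact hb1
  · have hancw : ancF A xd E w = w := ancF_pred_root (G.wf H) H.indeg hedge hpp
    obtain ⟨i0, -, -, hall0⟩ := G.type_coalition H hedge
    exact ⟨i0, hall0 a haA hxa, hall0 b hbA (by rw [hxb, hancw])⟩

lemma anc_eq {j : Fin t} (hj : (C j).Nonempty) : ∀ n : ℕ, ∀ (i : Fin k) (a b : ℕ),
    a ∈ G.Tl i → b ∈ G.Tl i → xd a ≤ xd b →
    ((G.Tl i).filter (fun e => xd a < xd e ∧ xd e ≤ xd b)).card = n →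
    xd a ∈ C j → xd a ≠ (C j).min' hj →
    ancF A xd E (xd a) = ancF A xd E (xd b) := by
  intro n
  induction n using Nat.strong_induction_on with
  | _ n IH =>
  intro i a b ha hb hab hcard haC hane
  rcases eq_or_lt_of_le hab with heq | hlt
  · rw [heq]
  · obtain ⟨c, hci, hc1, hc2, hedge⟩ := G.step H ha hb hlt
    have h1 : ancF A xd E (xd c) = ancF A xd E (xd a) :=
      ancF_pred_step (G.wf H) H.indeg hedge (G.comp_pred H hj haC hane)
    have hcC : xd c ∈ C j := (H.Cedge _ hedge j).mp haC
    have hcne : xd c ≠ (C j).min' hj :=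
      ne_of_gt ((Finset.min'_le _ _ haC).trans_lt hc1)
    have hsub : ((G.Tl i).filter (fun e => xd c < xd e ∧ xd e ≤ xd b)) ⊆
        ((G.Tl i).filter (fun e => xd a < xd e ∧ xd e ≤ xd b)) := by
      intro x hx
      rw [Finset.mem_filter] at hx ⊢
      exact ⟨hx.1, hc1.trans hx.2.1, hx.2.2⟩
    have hmem : c ∈ (G.Tl i).filter (fun e => xd a < xd e ∧ xd e ≤ xd b) :=
      Finset.mem_filter.mpr ⟨hci, hc1, hc2⟩
    have hnot : c ∉ (G.Tl i).filter (fun e => xd c < xd e ∧ xd e ≤ xd b) := by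
      simp [Finset.mem_filter]
    have hlt2 : ((G.Tl i).filter (fun e => xd c < xd e ∧ xd e ≤ xd b)).card < n := by
      rw [← hcard]
      exact Finset.card_lt_card ⟨hsub, fun hall => hnot (hall hmem)⟩
    rw [← h1]
    exact IH _ hlt2 i c b hci hb hc2 rfl hcC hcne

lemma high_eq {j : Fin t} (hj : (C j).Nonempty) {i : Fin k} {a : ℕ} (ha : a ∈ G.Tl i)
    (haC : xd a ∈ C j) (hane : xd a ≠ (C j).min' hj) :
    (G.Tl i).filter (fun b => xd b ≠ (C j).min' hj)
      = A.filter (fun b => xd b ∈ C j ∧ xd b ≠ (C j).min' hj ∧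
          ancF A xd E (xd b) = ancF A xd E (xd a)) := by
  ext b
  simp only [Finset.mem_filter]
  constructor
  · rintro ⟨hbT, hbne⟩
    have hbC : xd b ∈ C j := G.comp_closed H ha hbT haC
    refine ⟨G.subA H i hbT, hbC, hbne, ?_⟩
    rcases le_or_gt (xd a) (xd b) with h | h
    · exact (G.anc_eq H hj _ i a b ha hbT h rfl haC hane).symm
    · exact G.anc_eq H hj _ i b a hbT ha h.le rfl hbC hbne
  · rintro ⟨hbA, hbC, hbne, hanc⟩
    refine ⟨?_, hbne⟩
    have hv := G.anc_mem H hj _ (xd a) rfl haC hane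
    obtain ⟨c, hcA, hxc⟩ := (H.Ccover (ancF A xd E (xd a))).mp ⟨j, hv.1⟩
    obtain ⟨i1, ha1, hc1⟩ := G.anc_coalition H hj _ (xd a) rfl haC hane
      a (G.subA H i ha) rfl c hcA hxc
    obtain ⟨i2, hb2, hc2⟩ := G.anc_coalition H hj _ (xd b) rfl hbC hbne
      b hbA rfl c hcA (by rw [hxc, hanc])
    have e1 : i1 = i := G.mem_unique H ha1 ha
    have e2 : i2 = i1 := G.mem_unique H hc2 hc1
    rw [← e1, ← e2]
    exact hb2

lemma nT_below {j : Fin t} (hj : (C j).Nonempty) {i : Fin k} {a : ℕ} (ha : a ∈ G.Tl i)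
    (haC : xd a ∈ C j) {r : ℝ} (hr : r ≤ (C j).min' hj) :
    nT xd (G.Tl i) r = G.lam j := by
  rw [nT_eq_card xd
    (fun c hc => le_trans hr (Finset.min'_le _ _ (G.comp_closed H ha hc haC)))]
  exact G.size j i ⟨a, ha⟩ ⟨a, ha, haC⟩

lemma nT_above {j : Fin t} (hj : (C j).Nonempty) {i : Fin k} {a : ℕ} (ha : a ∈ G.Tl i)
    (haC : xd a ∈ C j) (hane : xd a ≠ (C j).min' hj) {r : ℝ}
    (hr : (C j).min' hj < r) :
    nT xd (G.Tl i) r = ((A.filter (fun b => xd b ∈ C j ∧ xd b ≠ (C j).min' hj ∧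
          ancF A xd E (xd b) = ancF A xd E (xd a))).filter (fun b => r ≤ xd b)).card := by
  rw [← G.high_eq H hj ha haC hane]
  unfold nT
  congr 1
  ext c
  simp only [Finset.mem_filter]
  constructor
  · rintro ⟨hcT, hcr⟩
    exact ⟨⟨hcT, ne_of_gt (hr.trans_le hcr)⟩, hcr⟩
  · rintro ⟨⟨hcT, -⟩, hcr⟩
    exact ⟨hcT, hcr⟩

omit G in
lemma key {G G' : GA A xd q E C} {j : Fin t} (hj : (C j).Nonempty) {a : ℕ}
    {i i' : Fin k} (ha : a ∈ G.Tl i) (ha' : a ∈ G'.Tl i') (haC : xd a ∈ C j)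
    (hle : G'.lam j ≤ G.lam j) :
    phi xd (G.Tl i) (xd a) ≤ phi xd (G'.Tl i') (xd a) := by
  apply phi_mono_nT
  intro r h0 hr
  rcases le_or_gt r ((C j).min' hj) with hrl | hrh
  · rw [G.nT_below H hj ha haC hrl, G'.nT_below H hj ha' haC hrl]
    exact hle
  · have hane : xd a ≠ (C j).min' hj := by
      intro hc
      rw [hc] at hr
      exact absurd hr (not_le.mpr hrh)
    rw [G.nT_above H hj ha haC hane hrh, G'.nT_above H hj ha' haC hane hrh]

lemma lam_mono {j j' : Fin t} (hj : (C j).Nonempty) (hj' : (C j').Nonempty)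
    (hlt : (C j).min' hj < (C j').min' hj') : G.lam j' ≤ G.lam j := by
  obtain ⟨a, haA, hxa⟩ := (H.Ccover ((C j).min' hj)).mp ⟨j, Finset.min'_mem _ hj⟩
  obtain ⟨b, hbA, hxb⟩ := (H.Ccover ((C j').min' hj')).mp ⟨j', Finset.min'_mem _ hj'⟩
  obtain ⟨i, hi⟩ := G.exists_idx H haA
  obtain ⟨i2, hi2⟩ := G.exists_idx H hbA
  have hxaC : xd a ∈ C j := hxa ▸ Finset.min'_mem _ hj
  have hxbC : xd b ∈ C j' := hxb ▸ Finset.min'_mem _ hj'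
  have hjj' : j ≠ j' := by
    intro hc
    subst hc
    exact lt_irrefl _ hlt
  have hne : i ≠ i2 := by
    intro hc
    rw [hc] at hi
    have : xd b ∈ C j := G.comp_closed H hi hi2 hxaC
    exact (Finset.disjoint_left.mp (H.Cdisj j j' hjj') this) hxbC
  have hef := G.ef_phi H hne hi hi2
  have hρpos : 0 < (C j).min' hj := hxa ▸ H.posx a haA
  have hL : phi xd (G.Tl i) (xd a) = ((G.lam j : ℝ≥0∞))⁻¹ * ENNReal.ofReal ((C j).min' hj) := by
    rw [hxa]
    exact phi_eq_const xd hρpos.le (fun r _ hr => G.nT_below H hj hi hxaC hr)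
  have hcardi2 : (G.Tl i2).card = G.lam j' := G.size j' i2 ⟨b, hi2⟩ ⟨b, hi2, hxbC⟩
  have hR : phi xd ((G.Tl i2).erase b ∪ {a}) (xd a)
      = ((G.lam j' : ℝ≥0∞))⁻¹ * ENNReal.ofReal ((C j).min' hj) := by
    rw [hxa]
    apply phi_eq_const xd hρpos.le
    intro r h0 hr
    have hrb : r ≤ xd b := by
      rw [hxb]
      exact hr.trans hlt.le
    rw [nT_replace_low xd (G.notin_other H hi hne) hi2 hrb (hxa ▸ hr), ← hcardi2]
    apply nT_eq_card
    intro c hc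
    have hcC : xd c ∈ C j' := G.comp_closed H hi2 hc hxbC
    exact hr.trans (hlt.le.trans (Finset.min'_le _ _ hcC))
  rw [hL, hR] at hef
  have hne0 : ENNReal.ofReal ((C j).min' hj) ≠ 0 := by
    simp only [ne_eq, ENNReal.ofReal_eq_zero, not_le]
    exact hρpos
  have h2 := (ENNReal.mul_le_mul_iff_left hne0 ENNReal.ofReal_ne_top).mp hef
  have h3 : (G.lam j' : ℝ≥0∞) ≤ (G.lam j : ℝ≥0∞) := ENNReal.inv_le_inv.mp h2
  exact_mod_cast h3

end GA

section Mix
variable {A : Finset ℕ} {xd : ℕ → ℝ} {k t : ℕ} {q : Fin k → ℕ}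
  {E : Finset (ℝ × ℝ)} {C : Fin t → Finset ℝ}

/-- The nonempty coalitions of an allocation. -/
noncomputable def coal (X : GA A xd q E C) : Finset (Finset ℕ) :=
  (Finset.univ.image X.Tl).filter (fun T => T.Nonempty)

/-- The nonempty coalitions of an allocation meeting component `j`. -/
noncomputable def coalC (X : GA A xd q E C) (j : Fin t) : Finset (Finset ℕ) :=
  (coal X).filter (fun T => ∃ a ∈ T, xd a ∈ C j)

/-- The per-component winner allocation. -/
noncomputable def Wv (G G' : GA A xd q E C) (j : Fin t) : GA A xd q E C :=
  if G'.lam j ≤ G.lam j then G else G'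

/-- The mixed coalition family. -/
noncomputable def mix (G G' : GA A xd q E C) : Finset (Finset ℕ) :=
  Finset.univ.biUnion (fun j : Fin t => coalC (Wv G G' j) j)

lemma Wv_lam (G G' : GA A xd q E C) (j : Fin t) :
    (Wv G G' j).lam j = max (G.lam j) (G'.lam j) := by
  unfold Wv
  split <;> omega

lemma mem_coal {X : GA A xd q E C} {T : Finset ℕ} :
    T ∈ coal X ↔ (∃ i, X.Tl i = T) ∧ T.Nonempty := by
  unfold coal
  simp [Finset.mem_filter, Finset.mem_image]

lemma mem_coalC {X : GA A xd q E C} {j : Fin t} {T : Finset ℕ} :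
    T ∈ coalC X j ↔ ((∃ i, X.Tl i = T) ∧ T.Nonempty) ∧ ∃ a ∈ T, xd a ∈ C j := by
  unfold coalC
  rw [Finset.mem_filter, mem_coal]

lemma coalC_types (H : Ctx A xd E C) {X : GA A xd q E C} {j : Fin t} {T : Finset ℕ}
    (hT : T ∈ coalC X j) : ∀ a ∈ T, xd a ∈ C j := by
  obtain ⟨⟨⟨i, hi⟩, -⟩, c, hcT, hcC⟩ := mem_coalC.mp hT
  subst hi
  exact fun a haT => X.comp_closed H hcT haT hcC

lemma coalC_card {X : GA A xd q E C} {j : Fin t} {T : Finset ℕ}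
    (hT : T ∈ coalC X j) : T.card = X.lam j := by
  obtain ⟨⟨⟨i, hi⟩, hne⟩, c, hcT, hcC⟩ := mem_coalC.mp hT
  subst hi
  exact X.size j i hne ⟨c, hcT, hcC⟩

lemma coal_disjoint (H : Ctx A xd E C) {X : GA A xd q E C} {T T' : Finset ℕ}
    (hT : T ∈ coal X) (hT' : T' ∈ coal X) (hne : T ≠ T') : Disjoint T T' := by
  obtain ⟨⟨i, hi⟩, -⟩ := mem_coal.mp hT
  obtain ⟨⟨i', hi'⟩, -⟩ := mem_coal.mp hT'
  subst hi hi'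
  exact X.part.1 i i' (fun hc => hne (by rw [hc]))

lemma coalC_family_disj (H : Ctx A xd E C) {X X' : GA A xd q E C} {j j' : Fin t}
    (hjj : j ≠ j') : Disjoint (coalC X j) (coalC X' j') := by
  rw [Finset.disjoint_left]
  intro T hT hT'
  obtain ⟨⟨-, ⟨c, hc⟩⟩, -⟩ := mem_coalC.mp hT
  have h1 : xd c ∈ C j := coalC_types H hT c hc
  have h2 : xd c ∈ C j' := coalC_types H hT' c hc
  exact (Finset.disjoint_left.mp (H.Cdisj j j' hjj) h1) h2

lemma mem_mix {G G' : GA A xd q E C} {T : Finset ℕ} :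
    T ∈ mix G G' ↔ ∃ j, T ∈ coalC (Wv G G' j) j := by
  unfold mix
  simp [Finset.mem_biUnion]

lemma mix_disjoint (H : Ctx A xd E C) {G G' : GA A xd q E C} {T T' : Finset ℕ}
    (hT : T ∈ mix G G') (hT' : T' ∈ mix G G') (hne : T ≠ T') : Disjoint T T' := by
  obtain ⟨j, hj⟩ := mem_mix.mp hT
  obtain ⟨j', hj'⟩ := mem_mix.mp hT'
  rcases eq_or_ne j j' with rfl | hjj
  · obtain ⟨⟨hc, -⟩, -⟩ := mem_coalC.mp hj
    obtain ⟨⟨hc', -⟩, -⟩ := mem_coalC.mp hj'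
    exact coal_disjoint H (mem_coal.mpr ⟨hc, (mem_coalC.mp hj).1.2⟩)
      (mem_coal.mpr ⟨hc', (mem_coalC.mp hj').1.2⟩) hne
  · rw [Finset.disjoint_left]
    intro a haT haT'
    have h1 : xd a ∈ C j := coalC_types H hj a haT
    have h2 : xd a ∈ C j' := coalC_types H hj' a haT'
    exact (Finset.disjoint_left.mp (H.Cdisj j j' hjj) h1) h2

lemma mix_sub (H : Ctx A xd E C) {G G' : GA A xd q E C} {T : Finset ℕ}
    (hT : T ∈ mix G G') : T ⊆ A := by
  obtain ⟨j, hj⟩ := mem_mix.mp hT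
  obtain ⟨⟨⟨i, hi⟩, -⟩, -⟩ := mem_coalC.mp hj
  subst hi
  exact (Wv G G' j).subA H i

lemma mix_cover (H : Ctx A xd E C) {G G' : GA A xd q E C} {a : ℕ} (ha : a ∈ A) :
    ∃ T ∈ mix G G', a ∈ T := by
  obtain ⟨j, hjC⟩ := (H.Ccover (xd a)).mpr ⟨a, ha, rfl⟩
  obtain ⟨i, hi⟩ := (Wv G G' j).exists_idx H ha
  refine ⟨(Wv G G' j).Tl i, mem_mix.mpr ⟨j, mem_coalC.mpr ⟨⟨⟨i, rfl⟩, ⟨a, hi⟩⟩,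
    ⟨a, hi, hjC⟩⟩⟩, hi⟩

lemma mix_nonempty {G G' : GA A xd q E C} {T : Finset ℕ} (hT : T ∈ mix G G') :
    T.Nonempty := by
  obtain ⟨j, hj⟩ := mem_mix.mp hT
  exact (mem_coalC.mp hj).1.2

/-- population count of a component. -/
lemma pop (H : Ctx A xd E C) (X : GA A xd q E C) (j : Fin t) :
    (A.filter (fun a => xd a ∈ C j)).card = (coalC X j).card * X.lam j := by
  classical
  have hset : A.filter (fun a => xd a ∈ C j) = (coalC X j).biUnion id := by
    ext a
    rw [Finset.mem_filter, Finset.mem_biUnion]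
    constructor
    · rintro ⟨haA, haC⟩
      obtain ⟨i, hi⟩ := X.exists_idx H haA
      exact ⟨X.Tl i, mem_coalC.mpr ⟨⟨⟨i, rfl⟩, ⟨a, hi⟩⟩, ⟨a, hi, haC⟩⟩, hi⟩
    · rintro ⟨T, hT, haT⟩
      obtain ⟨⟨⟨i, hi⟩, -⟩, -⟩ := mem_coalC.mp hT
      refine ⟨?_, coalC_types H hT a haT⟩
      subst hi
      exact X.subA H i haT
  rw [hset, Finset.card_biUnion]
  · rw [Finset.sum_congr rfl (fun T hT => (coalC_card hT : (id T).card = X.lam j)),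
      Finset.sum_const, smul_eq_mul]
  · intro T hT T' hT' hne
    exact coal_disjoint H (Finset.mem_filter.mp hT).1 (Finset.mem_filter.mp hT').1 hne

end Mix

section Count
variable {A : Finset ℕ} {xd : ℕ → ℝ} {k t : ℕ} {q : Fin k → ℕ}
  {E : Finset (ℝ × ℝ)} {C : Fin t → Finset ℝ}

lemma countMix (H : Ctx A xd E C) (G G' : GA A xd q E C) (c : ℕ) :
    ((mix G G').filter (fun T => c < T.card)).card
      ≤ (Finset.univ.filter (fun i : Fin k => c < (q i))).card := by
  classical
  -- choose the dominating allocation X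
  have hXex : ∃ X : GA A xd q E C, (∀ j, X.lam j ≤ max (G.lam j) (G'.lam j)) ∧
      (∀ j, (C j).Nonempty → c < max (G.lam j) (G'.lam j) → c < X.lam j) := by
    by_cases hcase : ∀ j : Fin t, (C j).Nonempty → c < max (G.lam j) (G'.lam j) → c < G.lam j
    · exact ⟨G, fun j => le_max_left _ _, hcase⟩
    · push_neg at hcase
      obtain ⟨j1, hj1ne, hj1max, hj1G⟩ := hcase
      refine ⟨G', fun j => le_max_right _ _, ?_⟩
      intro j2 hj2ne hj2max
      by_contra hj2'
      push_neg at hj2'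
      have hG'j1 : c < G'.lam j1 := by omega
      have hGj2 : c < G.lam j2 := by omega
      have hj12 : j1 ≠ j2 := by
        intro hc
        subst hc
        omega
      rcases lt_trichotomy ((C j1).min' hj1ne) ((C j2).min' hj2ne) with hlt | heq | hgt
      · have := G.lam_mono H hj1ne hj2ne hlt
        omega
      · have h1 := Finset.min'_mem _ hj1ne
        rw [heq] at h1
        exact (Finset.disjoint_left.mp (H.Cdisj j1 j2 hj12)
          (heq ▸ Finset.min'_mem _ hj1ne)) (Finset.min'_mem _ hj2ne)
      · have := G'.lam_mono H hj2ne hj1ne hgt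
        omega
  obtain ⟨X, hXle, hX⟩ := hXex
  -- decompose the mixed count per component
  have h1 : (mix G G').filter (fun T => c < T.card)
      = Finset.univ.biUnion (fun j : Fin t =>
          (coalC (Wv G G' j) j).filter (fun T => c < T.card)) := by
    unfold mix
    rw [Finset.filter_biUnion]
  have hdisj : ∀ j ∈ (Finset.univ : Finset (Fin t)), ∀ j' ∈ Finset.univ, j ≠ j' →
      Disjoint ((coalC (Wv G G' j) j).filter (fun T => c < T.card))
        ((coalC (Wv G G' j') j').filter (fun T => c < T.card)) :=
    fun j _ j' _ hjj => Finset.disjoint_of_subset_left (Finset.filter_subset _ _)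
      (Finset.disjoint_of_subset_right (Finset.filter_subset _ _) (coalC_family_disj H hjj))
  have hdisjX : ∀ j ∈ (Finset.univ : Finset (Fin t)), ∀ j' ∈ Finset.univ, j ≠ j' →
      Disjoint ((coalC X j).filter (fun T => c < T.card))
        ((coalC X j').filter (fun T => c < T.card)) :=
    fun j _ j' _ hjj => Finset.disjoint_of_subset_left (Finset.filter_subset _ _)
      (Finset.disjoint_of_subset_right (Finset.filter_subset _ _) (coalC_family_disj H hjj))
  rw [h1, Finset.card_biUnion hdisj]
  -- per component comparison
  have h2 : ∀ j : Fin t, ((coalC (Wv G G' j) j).filter (fun T => c < T.card)).card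
      ≤ ((coalC X j).filter (fun T => c < T.card)).card := by
    intro j
    by_cases hne : ((coalC (Wv G G' j) j).filter (fun T => c < T.card)).Nonempty
    · obtain ⟨T, hT⟩ := hne
      obtain ⟨hTc, hTcard⟩ := Finset.mem_filter.mp hT
      have hcWv : c < (Wv G G' j).lam j := (coalC_card hTc) ▸ hTcard
      have hCne : (C j).Nonempty := by
        obtain ⟨⟨-, -⟩, a, -, haC⟩ := mem_coalC.mp hTc
        exact ⟨xd a, haC⟩
      have hcX : c < X.lam j := hX j hCne (by rw [← Wv_lam G G' j]; exact hcWv)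
      have hXfull : (coalC X j).filter (fun T => c < T.card) = coalC X j :=
        Finset.filter_true_of_mem (fun T' hT' => (coalC_card hT').symm ▸ hcX)
      rw [hXfull]
      calc ((coalC (Wv G G' j) j).filter (fun T => c < T.card)).card
          ≤ (coalC (Wv G G' j) j).card := Finset.card_le_card (Finset.filter_subset _ _)
        _ ≤ (coalC X j).card := by
            have hpop1 := pop H (Wv G G' j) j
            have hpop2 := pop H X j
            have hle : X.lam j ≤ (Wv G G' j).lam j := by
              rw [Wv_lam]
              exact hXle j
            refine Nat.le_of_mul_le_mul_right ?_ (X.hlam j)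
            calc (coalC (Wv G G' j) j).card * X.lam j
                ≤ (coalC (Wv G G' j) j).card * (Wv G G' j).lam j :=
                  Nat.mul_le_mul_left _ hle
              _ = (coalC X j).card * X.lam j := by rw [← hpop1, hpop2]
    · rw [Finset.not_nonempty_iff_eq_empty.mp hne]
      simp
  calc ∑ j : Fin t, ((coalC (Wv G G' j) j).filter (fun T => c < T.card)).card
      ≤ ∑ j : Fin t, ((coalC X j).filter (fun T => c < T.card)).card :=
        Finset.sum_le_sum (fun j _ => h2 j)
    _ = (Finset.univ.biUnion (fun j : Fin t =>
          (coalC X j).filter (fun T => c < T.card))).card :=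
        (Finset.card_biUnion hdisjX).symm
    _ ≤ ((coal X).filter (fun T => c < T.card)).card := by
        apply Finset.card_le_card
        intro T hT
        obtain ⟨j, -, hj⟩ := Finset.mem_biUnion.mp hT
        obtain ⟨hj1, hj2⟩ := Finset.mem_filter.mp hj
        exact Finset.mem_filter.mpr ⟨(Finset.mem_filter.mp hj1).1, hj2⟩
    _ ≤ (Finset.univ.filter (fun i : Fin k => c < (X.Tl i).card)).card := by
        have hsub : (coal X).filter (fun T => c < T.card)
            ⊆ (Finset.univ.filter (fun i : Fin k => c < (X.Tl i).card)).image X.Tl := by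
          intro T hT
          obtain ⟨hT1, hT2⟩ := Finset.mem_filter.mp hT
          obtain ⟨⟨i, hi⟩, -⟩ := mem_coal.mp hT1
          exact Finset.mem_image.mpr ⟨i,
            Finset.mem_filter.mpr ⟨Finset.mem_univ _, hi ▸ hT2⟩, hi⟩
        exact le_trans (Finset.card_le_card hsub) Finset.card_image_le
    _ ≤ (Finset.univ.filter (fun i : Fin k => c < q i)).card := by
        apply Finset.card_le_card
        intro i hi
        rw [Finset.mem_filter] at hi ⊢
        exact ⟨hi.1, lt_of_lt_of_le hi.2 (X.feas i)⟩

lemma exists_assignment (H : Ctx A xd E C) (G G' : GA A xd q E C)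
    (hq : ∀ i j : Fin k, i ≤ j → q j ≤ q i) :
    ∃ Tl'' : Fin k → Finset ℕ,
      (∀ i, Tl'' i ∈ mix G G' ∨ Tl'' i = ∅) ∧
      (∀ T ∈ mix G G', ∃ i, Tl'' i = T) ∧
      (∀ i i' : Fin k, i ≠ i' → (Tl'' i).Nonempty → Tl'' i ≠ Tl'' i') ∧
      (∀ i, (Tl'' i).card ≤ q i) := by
  classical
  set L := (mix G G').toList.mergeSort (fun S T => decide (T.card ≤ S.card)) with hLdef
  have hperm : L.Perm (mix G G').toList := List.mergeSort_perm _ _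
  have hnodup : L.Nodup := hperm.nodup_iff.mpr (Finset.nodup_toList _)
  have hmemL : ∀ {T : Finset ℕ}, T ∈ L ↔ T ∈ mix G G' := by
    intro T
    rw [hperm.mem_iff, Finset.mem_toList]
  have hsorted : L.Pairwise (fun S T => T.card ≤ S.card) := by
    have h := List.pairwise_mergeSort (le := fun S T : Finset ℕ => decide (T.card ≤ S.card))
      (fun a b c h1 h2 => by simp only [decide_eq_true_eq] at *; omega)
      (fun a b => by simp only [Bool.or_eq_true, decide_eq_true_eq]; omega)
      (mix G G').toList
    rw [← hLdef] at h
    exact h.imp (fun h => by simpa using h)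
  have hlenmix : L.length = (mix G G').card := by
    rw [hperm.length_eq, Finset.length_toList]
  have hlenk : L.length ≤ k := by
    rw [hlenmix]
    have h0 : mix G G' = (mix G G').filter (fun T => 0 < T.card) :=
      (Finset.filter_true_of_mem
        (fun T hT => Finset.card_pos.mpr (mix_nonempty hT))).symm
    calc (mix G G').card = ((mix G G').filter (fun T => 0 < T.card)).card := by rw [← h0]
      _ ≤ (Finset.univ.filter (fun i : Fin k => 0 < q i)).card := countMix H G G' 0
      _ ≤ (Finset.univ : Finset (Fin k)).card := Finset.card_filter_le _ _
      _ = k := by simp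
  refine ⟨fun i => L.getD i ∅, ?_, ?_, ?_, ?_⟩
  · intro i
    dsimp only
    by_cases h : (i : ℕ) < L.length
    · left
      rw [List.getD_eq_getElem _ _ h]
      exact hmemL.mp (List.getElem_mem h)
    · right
      exact List.getD_eq_default _ _ (le_of_not_gt h)
  · intro T hT
    obtain ⟨m, hm⟩ := List.mem_iff_get.mp (hmemL.mpr hT)
    refine ⟨⟨(m : ℕ), lt_of_lt_of_le m.isLt hlenk⟩, ?_⟩
    simp only
    rw [List.getD_eq_getElem _ _ (by exact m.isLt)]
    rw [← hm]
    rfl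
  · intro i i' hne hnonempty
    dsimp only at hnonempty ⊢
    by_cases h : (i : ℕ) < L.length
    · by_cases h' : (i' : ℕ) < L.length
      · rw [List.getD_eq_getElem _ _ h, List.getD_eq_getElem _ _ h']
        intro hc
        have h2 := (hnodup.get_inj_iff (i := ⟨i, h⟩) (j := ⟨i', h'⟩)).mp (by simpa using hc)
        have h3 : (i : ℕ) = (i' : ℕ) := by simpa using h2
        exact hne (Fin.ext h3)
      · rw [List.getD_eq_default _ _ (le_of_not_gt h')]
        intro hc
        rw [hc] at hnonempty
        exact Finset.not_nonempty_empty hnonempty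
    · rw [List.getD_eq_default _ _ (le_of_not_gt h)] at hnonempty
      exact absurd hnonempty Finset.not_nonempty_empty
  · intro i
    dsimp only
    by_cases h : (i : ℕ) < L.length
    · rw [List.getD_eq_getElem _ _ h]
      by_contra hqi
      push_neg at hqi
      -- the first i+1 entries all have card > q i
      have htake : ∀ m : Fin L.length, (m : ℕ) ≤ (i : ℕ) → q i < (L.get m).card := by
        intro m hm
        rcases eq_or_lt_of_le hm with heq | hlt
        · have : L.get m = L[(i : ℕ)] := by
            congr 1
            exact Fin.ext heq
          rw [this]
          exact hqi
        · have := List.pairwise_iff_get.mp hsorted m ⟨(i : ℕ), h⟩ (show m < ⟨(i : ℕ), h⟩ from hlt)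
          have h2 : L[(i : ℕ)].card ≤ (L.get m).card := this
          exact lt_of_lt_of_le hqi h2
      set P := (Finset.univ.filter (fun m : Fin L.length => (m : ℕ) ≤ (i : ℕ))).image
        (fun m => L.get m) with hP
      have hPcard : P.card = (Finset.univ.filter
          (fun m : Fin L.length => (m : ℕ) ≤ (i : ℕ))).card := by
        apply Finset.card_image_of_injOn
        intro m1 _ m2 _ hm
        exact (hnodup.get_inj_iff).mp hm
      have hfiltcard : (Finset.univ.filter
          (fun m : Fin L.length => (m : ℕ) ≤ (i : ℕ))).card = (i : ℕ) + 1 := by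
        have himg : (Finset.univ.filter
            (fun m : Fin L.length => (m : ℕ) ≤ (i : ℕ))).image (fun m : Fin L.length => (m : ℕ))
            = Finset.range ((i : ℕ) + 1) := by
          ext n
          simp only [Finset.mem_image, Finset.mem_filter, Finset.mem_univ, true_and,
            Finset.mem_range]
          constructor
          · rintro ⟨m, hm, rfl⟩
            omega
          · intro hn
            exact ⟨⟨n, by omega⟩, by simp; omega, rfl⟩
        have := congrArg Finset.card himg
        rwa [Finset.card_image_of_injOn (fun m1 _ m2 _ hm => Fin.ext hm),
          Finset.card_range] at this
      have hPsub : P ⊆ (mix G G').filter (fun T => q i < T.card) := by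
        intro T hT
        obtain ⟨m, hm, rfl⟩ := Finset.mem_image.mp hT
        obtain ⟨-, hm2⟩ := Finset.mem_filter.mp hm
        exact Finset.mem_filter.mpr ⟨hmemL.mp (List.get_mem L m), htake m hm2⟩
      have hbound1 : (i : ℕ) + 1 ≤ ((mix G G').filter (fun T => q i < T.card)).card := by
        rw [← hfiltcard, ← hPcard]
        exact Finset.card_le_card hPsub
      have hbound2 := countMix H G G' (q i)
      have hbound3 : (Finset.univ.filter (fun i' : Fin k => q i < q i')).card ≤ (i : ℕ) := by
        have hsub : (Finset.univ.filter (fun i' : Fin k => q i < q i')).image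
            (fun i' : Fin k => (i' : ℕ)) ⊆ Finset.range (i : ℕ) := by
          intro n hn
          obtain ⟨i', hi', rfl⟩ := Finset.mem_image.mp hn
          obtain ⟨-, hqlt⟩ := Finset.mem_filter.mp hi'
          rw [Finset.mem_range]
          by_contra hge
          push_neg at hge
          have : i ≤ i' := by
            rw [Fin.le_def]
            omega
          exact absurd (hq i i' this) (not_le.mpr hqlt)
        calc (Finset.univ.filter (fun i' : Fin k => q i < q i')).card
            = ((Finset.univ.filter (fun i' : Fin k => q i < q i')).image
                (fun i' : Fin k => (i' : ℕ))).card :=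
              (Finset.card_image_of_injOn (fun m1 _ m2 _ hm => Fin.ext hm)).symm
          _ ≤ (Finset.range (i : ℕ)).card := Finset.card_le_card hsub
          _ = (i : ℕ) := Finset.card_range _
      omega
    · rw [List.getD_eq_default _ _ (le_of_not_gt h)]
      simp

end Count

/-- Semilattice property: for a fixed star-forest `G = E` (with
connected components `C`), the set `Λ_G` of size vectors of envy-free feasible
allocations realizing `G` is closed under componentwise maximum. -/
theorem stmt16 (A : Finset ℕ) (xd : ℕ → ℝ) (hposx : ∀ a ∈ A, 0 < xd a)
    (k t : ℕ) (q : Fin k → ℕ) (hq : ∀ i j : Fin k, i ≤ j → q j ≤ q i)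
    (E : Finset (ℝ × ℝ)) (C : Fin t → Finset ℝ)
    (hstar : IsStarForest E)
    (hCdisj : ∀ j j' : Fin t, j ≠ j' → Disjoint (C j) (C j'))
    (hCcover : ∀ y : ℝ, (∃ j, y ∈ C j) ↔ ∃ a ∈ A, xd a = y)
    (hCedge : ∀ e ∈ E, ∀ j : Fin t, e.1 ∈ C j ↔ e.2 ∈ C j)
    (hCconn : ∀ j : Fin t, ∀ y ∈ C j, ∀ z ∈ C j,
      Relation.ReflTransGen (fun u v : ℝ => (u, v) ∈ E ∨ (v, u) ∈ E) y z)
    (lam lam' : Fin t → ℕ)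
    (hlam : ∀ j, 0 < lam j) (hlam' : ∀ j, 0 < lam' j)
    (h1 : MemLambdaG A xd q E C lam) (h2 : MemLambdaG A xd q E C lam') :
    MemLambdaG A xd q E C (fun j => max (lam j) (lam' j)) := by
  classical
  obtain ⟨Tl1, hpart1, hfeas1, hef1, hgraph1, hsize1⟩ := h1
  obtain ⟨Tl2, hpart2, hfeas2, hef2, hgraph2, hsize2⟩ := h2
  have H : Ctx A xd E C := ⟨hposx, hstar.1, hstar.2.1, hCdisj, hCcover, hCedge, hCconn⟩
  set G : GA A xd q E C := ⟨Tl1, lam, hpart1, hfeas1, hef1, hgraph1, hsize1, hlam⟩ with hG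
  set G' : GA A xd q E C := ⟨Tl2, lam', hpart2, hfeas2, hef2, hgraph2, hsize2, hlam'⟩ with hG'
  obtain ⟨Tl'', hmem'', hsurj'', hinj'', hfeas''⟩ := exists_assignment H G G' hq
  have hmixmem : ∀ {i : Fin k} {a : ℕ}, a ∈ Tl'' i → Tl'' i ∈ mix G G' := by
    intro i a ha
    rcases hmem'' i with h | h
    · exact h
    · rw [h] at ha
      exact absurd ha (Finset.notMem_empty a)
  have hPart : IsPartition A Tl'' := by
    constructor
    · intro i i' hne
      rcases Finset.eq_empty_or_nonempty (Tl'' i) with h | h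
      · rw [h]; exact Finset.disjoint_empty_left _
      · rcases Finset.eq_empty_or_nonempty (Tl'' i') with h' | h'
        · rw [h']; exact Finset.disjoint_empty_right _
        · obtain ⟨a, ha⟩ := h
          obtain ⟨b, hb⟩ := h'
          exact mix_disjoint H (hmixmem ha) (hmixmem hb) (hinj'' i i' hne ⟨a, ha⟩)
    · ext a
      rw [Finset.mem_biUnion]
      constructor
      · rintro ⟨i, -, hai⟩
        exact mix_sub H (hmixmem hai) hai
      · intro ha
        obtain ⟨T, hT, haT⟩ := mix_cover H ha
        obtain ⟨i, hi⟩ := hsurj'' T hT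
        exact ⟨i, Finset.mem_univ _, hi ▸ haT⟩
  have hsubA : ∀ (i : Fin k), Tl'' i ⊆ A := by
    intro i a ha
    exact mix_sub H (hmixmem ha) ha
  refine ⟨Tl'', hPart, hfeas'', ?_, ?_, ?_⟩
  · -- EnvyFree
    intro i i' hne a ha b hb
    have hanotin : a ∉ Tl'' i' :=
      fun hc => (Finset.disjoint_left.mp (hPart.1 i i' hne) ha) hc
    unfold taxiCost
    rw [if_pos (hfeas'' i)]
    have hcard : ((Tl'' i').erase b ∪ {a}).card = (Tl'' i').card := by
      have hanotin2 : a ∉ (Tl'' i').erase b :=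
        fun hmem => hanotin (Finset.mem_of_mem_erase hmem)
      rw [Finset.card_union_of_disjoint (Finset.disjoint_singleton_right.mpr hanotin2),
        Finset.card_erase_of_mem hb, Finset.card_singleton]
      have : 1 ≤ (Tl'' i').card := Finset.card_pos.mpr ⟨b, hb⟩
      omega
    rw [if_pos (le_of_eq_of_le hcard (hfeas'' i'))]
    -- reduce to phi inequality
    obtain ⟨ja, hja⟩ := mem_mix.mp (hmixmem ha)
    obtain ⟨jb, hjb⟩ := mem_mix.mp (hmixmem hb)
    have haC : xd a ∈ C ja := coalC_types H hja a ha
    have hbC : xd b ∈ C jb := coalC_types H hjb b hb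
    obtain ⟨⟨⟨ia, hia⟩, -⟩, -⟩ := mem_coalC.mp hja
    obtain ⟨⟨⟨ib, hib⟩, -⟩, -⟩ := mem_coalC.mp hjb
    have hTS : Tl'' i ≠ Tl'' i' := hinj'' i i' hne ⟨a, ha⟩
    have haA : a ∈ A := hsubA i ha
    have hCjane : (C ja).Nonempty := ⟨xd a, haC⟩
    by_cases hca : G'.lam ja ≤ G.lam ja <;> by_cases hcb : G'.lam jb ≤ G.lam jb
    · -- both winners are G
      rw [Wv, if_pos hca] at hia
      rw [Wv, if_pos hcb] at hib
      have hne2 : ia ≠ ib := fun hc => hTS (by rw [← hia, ← hib, hc])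
      rw [← hia, ← hib]
      exact G.ef_phi H hne2 (by rw [hia]; exact ha) (by rw [hib]; exact hb)
    · -- a's winner G, b's winner G'
      rw [Wv, if_pos hca] at hia
      rw [Wv, if_neg hcb] at hib
      obtain ⟨i2, hi2⟩ := G'.exists_idx H haA
      have step1 : phi xd (G.Tl ia) (xd a) ≤ phi xd (G'.Tl i2) (xd a) :=
        GA.key H hCjane (by rw [hia]; exact ha) hi2 haC hca
      have hne2 : i2 ≠ ib := by
        intro hc
        rw [hc] at hi2
        rw [hib] at hi2
        exact hanotin hi2
      have step2 : phi xd (G'.Tl i2) (xd a) ≤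
          phi xd ((G'.Tl ib).erase b ∪ {a}) (xd a) :=
        G'.ef_phi H hne2 hi2 (by rw [hib]; exact hb)
      rw [← hia, ← hib]
      exact step1.trans step2
    · -- a's winner G', b's winner G
      rw [Wv, if_neg hca] at hia
      rw [Wv, if_pos hcb] at hib
      obtain ⟨i2, hi2⟩ := G.exists_idx H haA
      have step1 : phi xd (G'.Tl ia) (xd a) ≤ phi xd (G.Tl i2) (xd a) :=
        GA.key H hCjane (by rw [hia]; exact ha) hi2 haC (le_of_lt (not_le.mp hca))
      have hne2 : i2 ≠ ib := by
        intro hc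
        rw [hc] at hi2
        rw [hib] at hi2
        exact hanotin hi2
      have step2 : phi xd (G.Tl i2) (xd a) ≤
          phi xd ((G.Tl ib).erase b ∪ {a}) (xd a) :=
        G.ef_phi H hne2 hi2 (by rw [hib]; exact hb)
      rw [← hia, ← hib]
      exact step1.trans step2
    · -- both winners are G'
      rw [Wv, if_neg hca] at hia
      rw [Wv, if_neg hcb] at hib
      have hne2 : ia ≠ ib := fun hc => hTS (by rw [← hia, ← hib, hc])
      rw [← hia, ← hib]
      exact G'.ef_phi H hne2 (by rw [hia]; exact ha) (by rw [hib]; exact hb)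
  · -- AllocGraphEq
    intro y z
    constructor
    · intro hyz
      obtain ⟨i1, ⟨u, hu, hxu⟩, -, -, -⟩ := (G.graph y z).mp hyz
      obtain ⟨j0, hj0⟩ := (H.Ccover y).mpr ⟨u, G.subA H i1 hu, hxu⟩
      obtain ⟨i0, hy1, hz1, hlt1, hno1⟩ := ((Wv G G' j0).graph y z).mp hyz
      obtain ⟨u', hu', hxu'⟩ := hy1
      have hmem : (Wv G G' j0).Tl i0 ∈ mix G G' :=
        mem_mix.mpr ⟨j0, mem_coalC.mpr ⟨⟨⟨i0, rfl⟩, ⟨u', hu'⟩⟩, ⟨u', hu', hxu' ▸ hj0⟩⟩⟩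
      obtain ⟨i'', hi''⟩ := hsurj'' _ hmem
      refine ⟨i'', ⟨u', by rw [hi'']; exact hu', hxu'⟩, ?_, hlt1, ?_⟩
      · obtain ⟨v, hv, hxv⟩ := hz1
        exact ⟨v, by rw [hi'']; exact hv, hxv⟩
      · rw [hi'']
        exact hno1
    · rintro ⟨i'', ⟨u, hu, hxu⟩, hz, hlt, hno⟩
      have hmem : Tl'' i'' ∈ mix G G' := hmixmem hu
      obtain ⟨j0, hj0⟩ := mem_mix.mp hmem
      obtain ⟨⟨⟨i0, hi0⟩, -⟩, -⟩ := mem_coalC.mp hj0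
      refine ((Wv G G' j0).graph y z).mpr ⟨i0, ⟨u, by rw [hi0]; exact hu, hxu⟩, ?_, hlt, ?_⟩
      · obtain ⟨v, hv, hxv⟩ := hz
        exact ⟨v, by rw [hi0]; exact hv, hxv⟩
      · rw [hi0]
        exact hno
  · -- SizeVecEq
    intro j i hne hmeet
    have hmem : Tl'' i ∈ mix G G' := by
      obtain ⟨a, ha⟩ := hne
      exact hmixmem ha
    obtain ⟨j0, hj0⟩ := mem_mix.mp hmem
    obtain ⟨c0, hc0T, hc0C⟩ := hmeet
    have hc0C0 : xd c0 ∈ C j0 := coalC_types H hj0 c0 hc0T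
    have hj0j : j0 = j := by
      by_contra hc
      exact (Finset.disjoint_left.mp (hCdisj j0 j hc) hc0C0) hc0C
    subst hj0j
    have := coalC_card hj0
    rw [this, Wv_lam]
end
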